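/- arXiv:1608.04835 — 7 statements merged into one kernel-verified Lean document; each statement's English description precedes it below -/
import Mathlib

section
/- For every positive integer n and integer k, the polynomial identity ∑_{i=0}^{n-1} C(k-1, i) · t^i · (1-t)^{n-1-i} = ∑_{i=0}^{n-1} C(k-n+i-1, i) · t^i holds in the polynomial ring ℚ[t], where k ≥ n + 1. -/
open Polynomial Finset

lemma aux_pascal (n m : ℕ) :
    (1 - X) * ∑ i ∈ Finset.range (n+1), (Nat.choose (m+1+i) i : Polynomial ℚ) * X ^ i =
      (∑ i ∈ Finset.range (n+1), (Nat.choose (m+i) i : Polynomial ℚ) * X ^ i)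
        - (Nat.choose (m+n+1) n : Polynomial ℚ) * X ^ (n+1) := by
  induction n with
  | zero => simp
  | succ n ih =>
    rw [Finset.sum_range_succ, mul_add, ih, Finset.sum_range_succ (n := n+1)]
    have e1 : m+1+(n+1) = m+n+2 := by omega
    have e2 : m+(n+1)+1 = m+n+2 := by omega
    have e3 : m+(n+1) = m+n+1 := by omega
    rw [e1, e2, e3]
    have h : (Nat.choose (m+n+2) (n+1) : Polynomial ℚ)
        = (Nat.choose (m+n+1) n : Polynomial ℚ) + (Nat.choose (m+n+1) (n+1) : Polynomial ℚ) := by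
      rw [← Nat.cast_add, ← Nat.choose_succ_succ]
    rw [h]
    ring

lemma main_lemma (n m : ℕ) :
    ∑ i ∈ Finset.range (n+1),
        (Nat.choose (n+1+m) i : Polynomial ℚ) * X ^ i * (1 - X) ^ (n - i) =
      ∑ i ∈ Finset.range (n+1), (Nat.choose (m+i) i : Polynomial ℚ) * X ^ i := by
  induction n generalizing m with
  | zero => simp
  | succ n ih =>
    rw [Finset.sum_range_succ, Finset.sum_range_succ (n := n+1)]
    have step : ∑ i ∈ Finset.range (n+1),
        (Nat.choose (n+1+1+m) i : Polynomial ℚ) * X ^ i * (1 - X) ^ (n + 1 - i)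
        = (1 - X) * ∑ i ∈ Finset.range (n+1),
            (Nat.choose (n+1+(m+1)) i : Polynomial ℚ) * X ^ i * (1 - X) ^ (n - i) := by
      rw [Finset.mul_sum]
      apply Finset.sum_congr rfl
      intro i hi
      have hi' : i ≤ n := by simpa [Nat.lt_succ_iff] using hi
      have : n + 1 - i = (n - i) + 1 := by omega
      rw [this]
      have : n+1+1+m = n+1+(m+1) := by omega
      rw [this]
      ring
    rw [step, ih (m+1), aux_pascal]
    have e1 : n+1+1+m = m+n+2 := by omega
    have e2 : m+(n+1) = m+n+1 := by omega
    rw [e1, e2, Nat.sub_self, pow_zero]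
    have h : (Nat.choose (m+n+2) (n+1) : Polynomial ℚ)
        = (Nat.choose (m+n+1) n : Polynomial ℚ) + (Nat.choose (m+n+1) (n+1) : Polynomial ℚ) := by
      rw [← Nat.cast_add, ← Nat.choose_succ_succ]
    rw [h]
    ring

theorem sum_formula_coefficient_identity (n k : ℕ) (hn : 1 ≤ n) (hk : n + 1 ≤ k) :
    ∑ i ∈ Finset.range n,
        (Nat.choose (k - 1) i : Polynomial ℚ) * X ^ i * (1 - X) ^ (n - 1 - i) =
      ∑ i ∈ Finset.range n, (Nat.choose (k - n + i - 1) i : Polynomial ℚ) * X ^ i := by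
  obtain ⟨n', rfl⟩ : ∃ n', n = n' + 1 := ⟨n - 1, by omega⟩
  obtain ⟨m, rfl⟩ : ∃ m, k = n' + 1 + m + 1 := ⟨k - (n' + 1) - 1, by omega⟩
  have := main_lemma n' m
  calc ∑ i ∈ Finset.range (n'+1),
        (Nat.choose (n'+1+m+1 - 1) i : Polynomial ℚ) * X ^ i * (1 - X) ^ (n'+1 - 1 - i)
      = ∑ i ∈ Finset.range (n'+1),
        (Nat.choose (n'+1+m) i : Polynomial ℚ) * X ^ i * (1 - X) ^ (n' - i) := by
        apply Finset.sum_congr rfl; intro i hi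
        congr 2 <;> omega
    _ = ∑ i ∈ Finset.range (n'+1), (Nat.choose (m+i) i : Polynomial ℚ) * X ^ i := this
    _ = ∑ i ∈ Finset.range (n'+1),
        (Nat.choose (n'+1+m+1 - (n'+1) + i - 1) i : Polynomial ℚ) * X ^ i := by
        apply Finset.sum_congr rfl; intro i hi
        have : n'+1+m+1 - (n'+1) + i - 1 = m+i := by omega
        rw [this]
end

section
/- Let n be a positive integer and x, y₁, y₂ indeterminates. Then, as an identity of rational functions over ℚ, ∑_{j=0}^{n} (-1)^j · (y₁ - j + 1)_{n-1} · (y₂ - j)_n / (j! · (n-j)! · (x-j)_{n+1}) = ∑_{j=0}^{n} (-1)^j · (y₁ - x - n + j + 1)_{n-1} · (y₂ - x - n + j)_n / (j! · (n-j)! · (x-j)_{n+1}). -/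
open Finset Polynomial

-- product formula
lemma poch_prod (n : ℕ) (u : ℝ) :
    (ascPochhammer ℝ n).eval u = ∏ k ∈ range n, (u + k) := by
  induction n with
  | zero => simp
  | succ n ih => rw [ascPochhammer_succ_eval, ih, prod_range_succ]

-- Pascal splitting helper
lemma pascal_split (n : ℕ) (g : ℕ → ℝ) :
    ∑ j ∈ range (n+2), (-1:ℝ)^j * ((n+1).choose j) * g j
      = ∑ j ∈ range (n+1), (-1:ℝ)^j * (n.choose j) * g j
        - ∑ j ∈ range (n+1), (-1:ℝ)^j * (n.choose j) * g (j+1) := by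
  have h1 : ∑ j ∈ range (n+2), (-1:ℝ)^j * ((n+1).choose j) * g j
      = (∑ j ∈ range (n+1), (-1:ℝ)^(j+1) * ((n+1).choose (j+1)) * g (j+1)) + g 0 := by
    rw [Finset.sum_range_succ']; simp
  have h2 : ∑ j ∈ range (n+2), (-1:ℝ)^j * (n.choose j) * g j
      = (∑ j ∈ range (n+1), (-1:ℝ)^(j+1) * (n.choose (j+1)) * g (j+1)) + g 0 := by
    rw [Finset.sum_range_succ']; simp
  have h3 : ∑ j ∈ range (n+2), (-1:ℝ)^j * (n.choose j) * g j
      = ∑ j ∈ range (n+1), (-1:ℝ)^j * (n.choose j) * g j := by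
    rw [Finset.sum_range_succ, Nat.choose_succ_self]; simp
  rw [h1]
  have : ∀ j ∈ range (n+1), (-1:ℝ)^(j+1) * ((n+1).choose (j+1)) * g (j+1)
      = (-1:ℝ)^(j+1) * (n.choose (j+1)) * g (j+1) - (-1:ℝ)^j * (n.choose j) * g (j+1) := by
    intro j _
    rw [Nat.choose_succ_succ]
    push_cast
    ring
  rw [Finset.sum_congr rfl this, Finset.sum_sub_distrib]
  have := h2.symm.trans h3
  linarith [this]

lemma lemA (n : ℕ) (u : ℝ) (hu : ∀ i : ℕ, i ≤ n → u + i ≠ 0) :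
    ∑ i ∈ range (n+1), (-1:ℝ)^i * (n.choose i) * (1 / (u + i))
      = n.factorial / ∏ k ∈ range (n+1), (u + k) := by
  induction n generalizing u with
  | zero => simp
  | succ n ih =>
    have hu' : ∀ i : ℕ, i ≤ n → u + i ≠ 0 := fun i hi => hu i (by omega)
    have hu1 : ∀ i : ℕ, i ≤ n → (u+1) + i ≠ 0 := by
      intro i hi
      have := hu (i+1) (by omega)
      push_cast at this ⊢
      intro h; apply this; linarith
    rw [pascal_split n (fun i => 1 / (u + i))]
    have e1 := ih u hu'
    have e2 := ih (u+1) hu1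
    have e2' : ∑ j ∈ range (n+1), (-1:ℝ)^j * (n.choose j) * (1 / (u + (j+1)))
        = n.factorial / ∏ k ∈ range (n+1), ((u+1) + k) := by
      rw [← e2]
      apply Finset.sum_congr rfl
      intro j _
      push_cast
      ring_nf
    push_cast
    rw [e1]
    rw [e2']
    have hA : (∏ k ∈ range (n+1), (u + (k:ℝ))) ≠ 0 :=
      Finset.prod_ne_zero_iff.2 fun k hk => hu k (by simp at hk; omega)
    have hB : (∏ k ∈ range (n+1), (u + 1 + (k:ℝ))) ≠ 0 := by
      refine Finset.prod_ne_zero_iff.2 fun k hk => ?_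
      have := hu (k+1) (by simp at hk; omega)
      push_cast at this ⊢; intro h; exact this (by linarith)
    have hP2 : (∏ k ∈ range (n+2), (u + (k:ℝ))) ≠ 0 :=
      Finset.prod_ne_zero_iff.2 fun k hk => hu k (by simp at hk; omega)
    have hPA : (∏ k ∈ range (n+2), (u + (k:ℝ)))
        = (∏ k ∈ range (n+1), (u + (k:ℝ))) * (u + ((n:ℝ)+1)) := by
      rw [Finset.prod_range_succ]; push_cast; ring
    have hPB : (∏ k ∈ range (n+2), (u + (k:ℝ)))
        = u * (∏ k ∈ range (n+1), (u + 1 + (k:ℝ))) := by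
      have hc : ∀ k ∈ range (n+1), u + ((k+1:ℕ):ℝ) = u + 1 + (k:ℝ) := fun k _ => by
        push_cast; ring
      rw [Finset.prod_range_succ', Finset.prod_congr rfl hc]
      push_cast; ring
    rw [div_sub_div _ _ hA hB, div_eq_div_iff (mul_ne_zero hA hB) hP2]
    push_cast [Nat.factorial_succ] at hPA hPB ⊢
    linear_combination ((n.factorial:ℝ) * (∏ k ∈ range (n+1), (u + 1 + (k:ℝ)))) * hPA - ((n.factorial:ℝ) * (∏ k ∈ range (n+1), (u + (k:ℝ)))) * hPB

lemma lemB : ∀ (n : ℕ) (p : Polynomial ℝ), p.natDegree < n → ∀ x : ℝ,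
    ∑ j ∈ range (n+1), (-1:ℝ)^j * (n.choose j) * p.eval (x - j) = 0 := by
  intro n
  induction n with
  | zero => intro p hp; omega
  | succ n ih =>
    intro p hp x
    by_cases hp0 : p.natDegree = 0
    · obtain ⟨c, rfl⟩ := Polynomial.natDegree_eq_zero.mp hp0
      simp only [Polynomial.eval_C]
      rw [← Finset.sum_mul]
      have : ∑ j ∈ range (n+1+1), (-1:ℝ)^j * ((n+1).choose j) = 0 := by
        have h := Int.alternating_sum_range_choose_of_ne (n := n+1) (by omega)
        have := congrArg (fun z : ℤ => (z : ℝ)) h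
        push_cast at this
        simpa using this
      rw [this, zero_mul]
    · set q : Polynomial ℝ := p - p.comp (X - C 1) with hq
      have hcompdeg : (p.comp (X - C 1)).natDegree = p.natDegree := by
        rw [Polynomial.natDegree_comp, natDegree_X_sub_C, mul_one]
      have hqdeg : q.natDegree < p.natDegree := by
        have hpne : p ≠ 0 := fun h => hp0 (by simp [h])
        have hlc : (p.comp (X - C 1)).leadingCoeff = p.leadingCoeff := by
          rw [Polynomial.leadingCoeff_comp (by rw [natDegree_X_sub_C]; exact one_ne_zero),
            (monic_X_sub_C (1:ℝ)).leadingCoeff, one_pow, mul_one]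
        have hdeg : p.degree = (p.comp (X - C 1)).degree := by
          rw [Polynomial.degree_eq_natDegree hpne, Polynomial.degree_eq_natDegree ?_, hcompdeg]
          intro h; rw [h] at hcompdeg; simp at hcompdeg; exact hp0 hcompdeg.symm
        have := Polynomial.degree_sub_lt hdeg hpne hlc.symm
        rcases eq_or_ne q 0 with h0 | h0
        · rw [h0]; simpa using Nat.pos_of_ne_zero hp0
        · exact Polynomial.natDegree_lt_natDegree h0 (by rwa [← hq] at this)
      have hqe : ∀ t : ℝ, q.eval t = p.eval t - p.eval (t - 1) := by
        intro t; simp [hq]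
      rw [show n+1+1 = n+2 from rfl, pascal_split n (fun j => p.eval (x - j))]
      have key : ∑ j ∈ range (n+1), (-1:ℝ)^j * (n.choose j) * p.eval (x - j)
          - ∑ j ∈ range (n+1), (-1:ℝ)^j * (n.choose j) * p.eval (x - (j+1))
          = ∑ j ∈ range (n+1), (-1:ℝ)^j * (n.choose j) * q.eval (x - j) := by
        rw [← Finset.sum_sub_distrib]
        apply Finset.sum_congr rfl
        intro j _
        rw [hqe]
        push_cast
        ring_nf
      push_cast at key ⊢
      rw [key, ih q (by omega) x]

lemma prod_range_sub_nat (i : ℕ) : ∏ j ∈ range i, (i - j) = i.factorial := by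
  induction i with
  | zero => simp
  | succ i ih =>
    rw [Finset.prod_range_succ']
    simp only [Nat.succ_sub_succ]
    rw [ih, Nat.sub_zero, Nat.factorial_succ, mul_comm]

lemma prod_erase_nodes (n i : ℕ) (hi : i ≤ n) :
    ∏ j ∈ (range (n+1)).erase i, ((j:ℝ) - i) = (-1:ℝ)^i * i.factorial * (n-i).factorial := by
  have hsplit : (range (n+1)).erase i = range i ∪ Ico (i+1) (n+1) := by
    ext j
    simp only [Finset.mem_erase, Finset.mem_range, Finset.mem_union, Finset.mem_Ico]
    omega
  have hdisj : Disjoint (range i) (Ico (i+1) (n+1)) := by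
    rw [Finset.disjoint_left]
    intro a ha hb
    simp only [Finset.mem_range] at ha
    simp only [Finset.mem_Ico] at hb
    omega
  rw [hsplit, Finset.prod_union hdisj]
  have h1 : ∏ j ∈ range i, ((j:ℝ) - i) = (-1:ℝ)^i * i.factorial := by
    have h : ∀ j ∈ range i, ((j:ℝ) - i) = (-1:ℝ) * (((i - j : ℕ) : ℝ)) := by
      intro j hj
      simp only [Finset.mem_range] at hj
      push_cast [Nat.cast_sub hj.le]
      ring
    rw [Finset.prod_congr rfl h, Finset.prod_mul_distrib, Finset.prod_const, Finset.card_range,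
      ← Nat.cast_prod, prod_range_sub_nat]
  have h2 : ∏ j ∈ Ico (i+1) (n+1), ((j:ℝ) - i) = (n-i).factorial := by
    rw [Finset.prod_Ico_eq_prod_range]
    have : ∀ j ∈ range (n+1-(i+1)), ((i+1+j:ℕ):ℝ) - i = ((j+1:ℕ):ℝ) := by
      intro j _; push_cast; ring
    rw [Finset.prod_congr rfl this, ← Nat.cast_prod, Finset.prod_range_add_one_eq_factorial]
    norm_num [show n+1-(i+1) = n-i from by omega]
  rw [h1, h2]

lemma lemC (n : ℕ) (u : ℝ) (hu : ∀ i : ℕ, i ≤ n → u + i ≠ 0) (g : Polynomial ℝ) :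
    g.eval u / (ascPochhammer ℝ (n+1)).eval u
      = (g /ₘ ascPochhammer ℝ (n+1)).eval u
        + ∑ i ∈ range (n+1),
            (-1:ℝ)^i * g.eval (-(i:ℝ)) / (i.factorial * (n-i).factorial * (u + i)) := by
  set P := ascPochhammer ℝ (n+1) with hPdef
  have hP : P.Monic := monic_ascPochhammer ℝ (n+1)
  have hPu : P.eval u = ∏ k ∈ range (n+1), (u + k) := poch_prod (n+1) u
  have hfac : ∀ k ∈ range (n+1), u + (k:ℝ) ≠ 0 := fun k hk => hu k (by
    simp only [Finset.mem_range] at hk; omega)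
  have hPu0 : P.eval u ≠ 0 := by rw [hPu]; exact Finset.prod_ne_zero_iff.2 hfac
  set r := g %ₘ P with hrdef
  have hdecomp : r.eval u + P.eval u * (g /ₘ P).eval u = g.eval u := by
    have := Polynomial.modByMonic_add_div g P
    calc r.eval u + P.eval u * (g /ₘ P).eval u = (r + P * (g /ₘ P)).eval u := by simp
    _ = g.eval u := by rw [this]
  have hnodes : ∀ i : ℕ, i ≤ n → r.eval (-(i:ℝ)) = g.eval (-(i:ℝ)) := by
    intro i hi
    have hP0 : P.eval (-(i:ℝ)) = 0 := by
      rw [poch_prod]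
      exact Finset.prod_eq_zero (i := i) (Finset.mem_range.2 (by omega)) (by push_cast; ring)
    have := Polynomial.modByMonic_add_div g P
    have h2 : r.eval (-(i:ℝ)) + P.eval (-(i:ℝ)) * (g /ₘ P).eval (-(i:ℝ)) = g.eval (-(i:ℝ)) := by
      calc r.eval (-(i:ℝ)) + P.eval (-(i:ℝ)) * (g /ₘ P).eval (-(i:ℝ))
          = (r + P * (g /ₘ P)).eval (-(i:ℝ)) := by simp
      _ = _ := by rw [this]
    rw [hP0, zero_mul, add_zero] at h2
    exact h2
  -- Lagrange interpolation of r
  have hinj : Set.InjOn (fun i : ℕ => -(i:ℝ)) (range (n+1)) := by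
    intro a _ b _ h
    simp only [neg_inj, Nat.cast_inj] at h
    exact h
  have hrdeg : r.degree < (#(range (n+1)) : ℕ) := by
    rw [Finset.card_range]
    refine lt_of_lt_of_le (Polynomial.degree_modByMonic_lt g hP) ?_
    rw [Polynomial.degree_eq_natDegree hP.ne_zero, hPdef, ascPochhammer_natDegree]
  have hr_interp := Lagrange.eq_interpolate hinj hrdeg
  have hrsum : r.eval u = ∑ i ∈ range (n+1),
      r.eval (-(i:ℝ)) * (Lagrange.basis (range (n+1)) (fun i : ℕ => -(i:ℝ)) i).eval u := by
    conv_lhs => rw [hr_interp]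
    rw [Lagrange.interpolate_apply, Polynomial.eval_finset_sum]
    exact Finset.sum_congr rfl fun i _ => by rw [Polynomial.eval_mul, Polynomial.eval_C]
  have hbasis : ∀ i ∈ range (n+1),
      (Lagrange.basis (range (n+1)) (fun i : ℕ => -(i:ℝ)) i).eval u
        = (∏ j ∈ (range (n+1)).erase i, (u + j)) * ((-1:ℝ)^i * i.factorial * (n-i).factorial)⁻¹ := by
    intro i hi
    rw [Lagrange.basis, Polynomial.eval_prod]
    have : ∀ j ∈ (range (n+1)).erase i,
        (Lagrange.basisDivisor (-(i:ℝ)) (-(j:ℝ))).eval u = (u + j) * (((j:ℝ) - i)⁻¹) := by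
      intro j _
      rw [Lagrange.basisDivisor, Polynomial.eval_mul, Polynomial.eval_C, Polynomial.eval_sub,
        Polynomial.eval_X, Polynomial.eval_C]
      rw [show (-(i:ℝ) - -(j:ℝ)) = (j:ℝ) - i from by ring]
      ring
    rw [Finset.prod_congr rfl this, Finset.prod_mul_distrib, Finset.prod_inv_distrib,
      prod_erase_nodes n i (by simp at hi; omega)]
  -- put it together
  rw [← hdecomp]
  rw [add_div, mul_comm, mul_div_assoc, div_self hPu0, mul_one, add_comm]
  congr 1
  rw [hrsum, Finset.sum_div]
  refine Finset.sum_congr rfl fun i hi => ?_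
  have hin : i ≤ n := by simp at hi; omega
  rw [hbasis i hi, hnodes i hin]
  have hA : (∏ j ∈ (range (n+1)).erase i, (u + (j:ℝ))) * (u + i) = P.eval u := by
    rw [hPu]
    exact Finset.prod_erase_mul _ _ (Finset.mem_range.2 (by omega))
  rw [← hA, mul_inv, mul_inv, show ((-1:ℝ)^i)⁻¹ = (-1:ℝ)^i from by rw [← inv_pow, inv_neg, inv_one]]
  have hAne : (∏ j ∈ (range (n+1)).erase i, (u + (j:ℝ))) ≠ 0 :=
    Finset.prod_ne_zero_iff.2 fun j hj => hfac j (Finset.mem_erase.mp hj).2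
  have hui : u + (i:ℝ) ≠ 0 := hu i hin
  have hif : (i.factorial : ℝ) ≠ 0 := Nat.cast_ne_zero.2 i.factorial_ne_zero
  have hnif : ((n-i).factorial : ℝ) ≠ 0 := Nat.cast_ne_zero.2 (n-i).factorial_ne_zero
  field_simp

lemma lemA' (n : ℕ) (u : ℝ) (hu : ∀ i : ℕ, i ≤ n → u + i ≠ 0) :
    (1:ℝ) / (ascPochhammer ℝ (n+1)).eval u
      = ∑ i ∈ range (n+1), (-1:ℝ)^i / (i.factorial * (n-i).factorial * (u + i)) := by
  have h := lemA n u hu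
  have hprod0 : (∏ k ∈ range (n+1), (u + (k:ℝ))) ≠ 0 :=
    Finset.prod_ne_zero_iff.2 fun k hk => hu k (by simp at hk; omega)
  have hnf : (n.factorial : ℝ) ≠ 0 := Nat.cast_ne_zero.2 n.factorial_ne_zero
  rw [poch_prod]
  have h2 : (1:ℝ) / ∏ k ∈ range (n+1), (u + (k:ℝ))
      = (∑ i ∈ range (n+1), (-1:ℝ)^i * (n.choose i) * (1 / (u + i))) / n.factorial := by
    rw [h]; field_simp
  rw [h2, Finset.sum_div]
  refine Finset.sum_congr rfl fun i hi => ?_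
  have hi' : i ≤ n := by simp at hi; omega
  have hc : ((n.choose i : ℝ)) * i.factorial * (n-i).factorial = n.factorial := by
    exact_mod_cast congrArg (Nat.cast : ℕ → ℝ)
      (Nat.choose_mul_factorial_mul_factorial hi')
  have hui : u + (i:ℝ) ≠ 0 := hu i hi'
  have hif : (i.factorial : ℝ) ≠ 0 := Nat.cast_ne_zero.2 i.factorial_ne_zero
  have hnif : ((n-i).factorial : ℝ) ≠ 0 := Nat.cast_ne_zero.2 (n-i).factorial_ne_zero
  field_simp
  linear_combination hc

lemma neg_one_pow_eq (a b : ℕ) (h : Even (a + b)) : (-1:ℝ)^a = (-1)^b := by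
  have h1 : (-1:ℝ)^(a+b) = 1 := h.neg_one_pow
  have hbb : Even (b+b) := ⟨b, rfl⟩
  have h2 : (-1:ℝ)^(b+b) = 1 := hbb.neg_one_pow
  rw [pow_add] at h1 h2
  calc (-1:ℝ)^a = (-1)^a * ((-1)^b * (-1)^b) := by rw [h2]; ring
  _ = ((-1)^a * (-1)^b) * (-1)^b := by ring
  _ = (-1)^b := by rw [h1]; ring

theorem hypergeometric_duality (n : ℕ) (hn : 1 ≤ n) (x y₁ y₂ : ℝ)
    (hx : ∀ j : ℕ, j ≤ n → (ascPochhammer ℝ (n + 1)).eval (x - j) ≠ 0) :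
    ∑ j ∈ Finset.range (n + 1),
        (-1 : ℝ) ^ j * (ascPochhammer ℝ (n - 1)).eval (y₁ - j + 1) *
            (ascPochhammer ℝ n).eval (y₂ - j) /
          (j.factorial * (n - j).factorial * (ascPochhammer ℝ (n + 1)).eval (x - j)) =
      ∑ j ∈ Finset.range (n + 1),
        (-1 : ℝ) ^ j * (ascPochhammer ℝ (n - 1)).eval (y₁ - x - n + j + 1) *
            (ascPochhammer ℝ n).eval (y₂ - x - n + j) /
          (j.factorial * (n - j).factorial * (ascPochhammer ℝ (n + 1)).eval (x - j)) := by
  have hne : ∀ j : ℕ, j ≤ n → ∀ i : ℕ, i ≤ n → x - j + i ≠ 0 := by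
    intro j hj i hi
    have h := hx j hj
    rw [poch_prod] at h
    exact Finset.prod_ne_zero_iff.1 h i (Finset.mem_range.2 (by omega))
  set f : Polynomial ℝ :=
    ((ascPochhammer ℝ (n-1)).comp (C (y₁+1) - X)) * ((ascPochhammer ℝ n).comp (C y₂ - X))
    with hf
  have hfe : ∀ t : ℝ, f.eval t
      = (ascPochhammer ℝ (n-1)).eval (y₁ + 1 - t) * (ascPochhammer ℝ n).eval (y₂ - t) := by
    intro t; simp [hf, Polynomial.eval_comp]
  set F := f.comp (X + C (n:ℝ)) with hF
  have hFe : ∀ t : ℝ, F.eval t = f.eval (t + n) := by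
    intro t; simp [hF, Polynomial.eval_comp]
  set Q := F /ₘ ascPochhammer ℝ (n+1) with hQ
  -- LHS transformation
  have hL : ∀ j ∈ range (n+1),
      (-1 : ℝ) ^ j * (ascPochhammer ℝ (n - 1)).eval (y₁ - j + 1) *
            (ascPochhammer ℝ n).eval (y₂ - j) /
          (j.factorial * (n - j).factorial * (ascPochhammer ℝ (n + 1)).eval (x - j))
      = ∑ i ∈ range (n+1),
          (-1:ℝ)^j * ((-1:ℝ)^i * f.eval (j:ℝ)
            / (j.factorial * (n-j).factorial * (i.factorial * (n-i).factorial * (x - j + i)))) := by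
    intro j hj
    have hj' : j ≤ n := by simp at hj; omega
    have h1 := lemA' n (x - j) (fun i hi => hne j hj' i hi)
    have hfj : f.eval (j:ℝ) = (ascPochhammer ℝ (n-1)).eval (y₁ - j + 1)
        * (ascPochhammer ℝ n).eval (y₂ - j) := by
      rw [hfe, show y₁ + 1 - (j:ℝ) = y₁ - j + 1 from by ring]
    calc (-1 : ℝ) ^ j * (ascPochhammer ℝ (n - 1)).eval (y₁ - j + 1) *
            (ascPochhammer ℝ n).eval (y₂ - j) /
          (j.factorial * (n - j).factorial * (ascPochhammer ℝ (n + 1)).eval (x - j))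
        = ((-1:ℝ)^j * f.eval (j:ℝ) / (j.factorial * (n-j).factorial))
            * (1 / (ascPochhammer ℝ (n+1)).eval (x - j)) := by rw [hfj]; ring
    _ = _ := by
        rw [h1, Finset.mul_sum]
        refine Finset.sum_congr rfl fun i hi2 => ?_
        have hi' : i ≤ n := by simp at hi2; omega
        have hxji : x - (j:ℝ) + i ≠ 0 := hne j hj' i hi'
        have hjf : (j.factorial : ℝ) ≠ 0 := Nat.cast_ne_zero.2 j.factorial_ne_zero
        have hnjf : ((n-j).factorial : ℝ) ≠ 0 := Nat.cast_ne_zero.2 (n-j).factorial_ne_zero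
        have hif : (i.factorial : ℝ) ≠ 0 := Nat.cast_ne_zero.2 i.factorial_ne_zero
        have hnif : ((n-i).factorial : ℝ) ≠ 0 := Nat.cast_ne_zero.2 (n-i).factorial_ne_zero
        field_simp
  -- RHS transformation
  have hR : ∀ j ∈ range (n+1),
      (-1 : ℝ) ^ j * (ascPochhammer ℝ (n - 1)).eval (y₁ - x - n + j + 1) *
            (ascPochhammer ℝ n).eval (y₂ - x - n + j) /
          (j.factorial * (n - j).factorial * (ascPochhammer ℝ (n + 1)).eval (x - j))
      = ((-1:ℝ)^j / (j.factorial * (n-j).factorial)) * Q.eval (x - j)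
        + ∑ i ∈ range (n+1),
            (-1:ℝ)^j * ((-1:ℝ)^i * f.eval ((n:ℝ) - i)
              / (j.factorial * (n-j).factorial * (i.factorial * (n-i).factorial * (x - j + i)))) := by
    intro j hj
    have hj' : j ≤ n := by simp at hj; omega
    have h1 := lemC n (x - j) (fun i hi => hne j hj' i hi) F
    have hFx : F.eval (x - j) = (ascPochhammer ℝ (n-1)).eval (y₁ - x - n + j + 1)
        * (ascPochhammer ℝ n).eval (y₂ - x - n + j) := by
      rw [hFe, hfe, show y₁ + 1 - (x - (j:ℝ) + n) = y₁ - x - n + j + 1 from by ring,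
        show y₂ - (x - (j:ℝ) + n) = y₂ - x - n + j from by ring]
    have step : (-1 : ℝ) ^ j * (ascPochhammer ℝ (n - 1)).eval (y₁ - x - n + j + 1) *
            (ascPochhammer ℝ n).eval (y₂ - x - n + j) /
          (j.factorial * (n - j).factorial * (ascPochhammer ℝ (n + 1)).eval (x - j))
        = ((-1:ℝ)^j / (j.factorial * (n-j).factorial))
            * (F.eval (x - j) / (ascPochhammer ℝ (n+1)).eval (x - j)) := by
      rw [hFx]; ring
    rw [step, h1, mul_add]
    congr 1
    rw [Finset.mul_sum]
    refine Finset.sum_congr rfl fun i hi => ?_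
    have hi' : i ≤ n := by simp at hi; omega
    have hFi : F.eval (-(i:ℝ)) = f.eval ((n:ℝ) - i) := by
      rw [hFe, show -(i:ℝ) + n = (n:ℝ) - i from by ring]
    have hxji : x - (j:ℝ) + i ≠ 0 := hne j hj' i hi'
    have hjf : (j.factorial : ℝ) ≠ 0 := Nat.cast_ne_zero.2 j.factorial_ne_zero
    have hnjf : ((n-j).factorial : ℝ) ≠ 0 := Nat.cast_ne_zero.2 (n-j).factorial_ne_zero
    have hif : (i.factorial : ℝ) ≠ 0 := Nat.cast_ne_zero.2 i.factorial_ne_zero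
    have hnif : ((n-i).factorial : ℝ) ≠ 0 := Nat.cast_ne_zero.2 (n-i).factorial_ne_zero
    rw [hFi]
    field_simp
  rw [Finset.sum_congr rfl hL, Finset.sum_congr rfl hR, Finset.sum_add_distrib]
  -- the quotient part vanishes
  have hQdeg : Q.natDegree < n := by
    have hdeg1 : ((ascPochhammer ℝ (n-1)).comp (C (y₁+1) - X)).natDegree ≤ n - 1 := by
      rw [Polynomial.natDegree_comp, show C (y₁+1) - X = -(X - C (y₁+1)) from by ring,
        Polynomial.natDegree_neg, natDegree_X_sub_C, mul_one, ascPochhammer_natDegree]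
    have hdeg2 : ((ascPochhammer ℝ n).comp (C y₂ - X)).natDegree ≤ n := by
      rw [Polynomial.natDegree_comp, show C y₂ - X = -(X - C y₂) from by ring,
        Polynomial.natDegree_neg, natDegree_X_sub_C, mul_one, ascPochhammer_natDegree]
    have hdf : f.natDegree ≤ (n-1) + n :=
      (Polynomial.natDegree_mul_le).trans (add_le_add hdeg1 hdeg2)
    have hdF : F.natDegree = f.natDegree := by
      rw [hF, Polynomial.natDegree_comp, natDegree_X_add_C, mul_one]
    rw [hQ, Polynomial.natDegree_divByMonic F (monic_ascPochhammer ℝ (n+1)),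
      ascPochhammer_natDegree, hdF]
    omega
  have hzero : ∑ j ∈ range (n+1),
      ((-1:ℝ)^j / (j.factorial * (n-j).factorial)) * Q.eval (x - j) = 0 := by
    have h := lemB n Q hQdeg x
    have : ∀ j ∈ range (n+1), ((-1:ℝ)^j / (j.factorial * (n-j).factorial)) * Q.eval (x - j)
        = ((-1:ℝ)^j * (n.choose j) * Q.eval (x - j)) / n.factorial := by
      intro j hj
      have hj' : j ≤ n := by simp at hj; omega
      have hc : ((n.choose j : ℝ)) * j.factorial * (n-j).factorial = n.factorial := by
        exact_mod_cast congrArg (Nat.cast : ℕ → ℝ)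
          (Nat.choose_mul_factorial_mul_factorial hj')
      have hjf : (j.factorial : ℝ) ≠ 0 := Nat.cast_ne_zero.2 j.factorial_ne_zero
      have hnjf : ((n-j).factorial : ℝ) ≠ 0 := Nat.cast_ne_zero.2 (n-j).factorial_ne_zero
      have hnf : (n.factorial : ℝ) ≠ 0 := Nat.cast_ne_zero.2 n.factorial_ne_zero
      field_simp
      linear_combination (-(Q.eval (x - j))) * hc
    rw [Finset.sum_congr rfl this, ← Finset.sum_div, h, zero_div]
  rw [hzero, zero_add]
  -- the double sums agree via the reflection bijection
  rw [← Finset.sum_product', ← Finset.sum_product']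
  refine (Finset.sum_nbij' (fun p => (n - p.2, n - p.1)) (fun p => (n - p.2, n - p.1))
    ?_ ?_ ?_ ?_ ?_).symm
  · intro p hp
    simp only [Finset.mem_product, Finset.mem_range] at hp ⊢
    omega
  · intro p hp
    simp only [Finset.mem_product, Finset.mem_range] at hp ⊢
    omega
  · intro p hp
    simp only [Finset.mem_product, Finset.mem_range] at hp
    ext <;> simp <;> omega
  · intro p hp
    simp only [Finset.mem_product, Finset.mem_range] at hp
    ext <;> simp <;> omega
  · rintro ⟨j, i⟩ hp
    simp only [Finset.mem_product, Finset.mem_range] at hp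
    obtain ⟨hj, hi⟩ := hp
    have hj' : j ≤ n := by omega
    have hi' : i ≤ n := by omega
    simp only
    rw [show n - (n - i) = i from by omega, show n - (n - j) = j from by omega]
    rw [Nat.cast_sub hi', Nat.cast_sub hj']
    have hsig : (-1:ℝ)^(n-i) * (-1:ℝ)^(n-j) = (-1:ℝ)^j * (-1:ℝ)^i := by
      rw [← pow_add, ← pow_add]
      apply neg_one_pow_eq
      rw [Nat.even_iff]
      omega
    have hd : x - ((n:ℝ) - i) + ((n:ℝ) - j) = x - j + i := by ring
    rw [hd]
    calc (-1:ℝ)^j * ((-1:ℝ)^i * f.eval ((n:ℝ) - i)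
            / (j.factorial * (n-j).factorial * (i.factorial * (n-i).factorial * (x - j + i))))
        = ((-1:ℝ)^j * (-1:ℝ)^i) * (f.eval ((n:ℝ) - i)
            / (j.factorial * (n-j).factorial * (i.factorial * (n-i).factorial * (x - j + i)))) := by
          ring
    _ = ((-1:ℝ)^(n-i) * (-1:ℝ)^(n-j)) * (f.eval ((n:ℝ) - i)
            / (j.factorial * (n-j).factorial * (i.factorial * (n-i).factorial * (x - j + i)))) := by
          rw [hsig]
    _ = _ := by ring
end

section
/- Let R be a commutative ring, t ∈ R a unit, k > n ≥ 1 integers, and z ∈ R. Suppose (G_i)_{1≤i≤n} are elements of R satisfying ∑_{i=1}^{m} (-t)^{m-i} · C(k-i-1, m-i) · G_i = z for every m with 1 ≤ m ≤ n. Then G_n = (∑_{i=1}^{n} C(k-1-i, n-i) · t^{n-i}) · z. -/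
open Finset

private lemma alt_sum {R : Type*} [CommRing R] (d : ℕ) :
    ∑ b ∈ Finset.range (d + 1), (-1 : R) ^ (d - b) * (Nat.choose d b : R) =
      if d = 0 then 1 else 0 := by
  have hf : ∀ b ∈ Finset.range (d + 1),
      (-1 : R) ^ (d - b) * (Nat.choose d b : R)
        = (-1) ^ d * ((-1) ^ b * (Nat.choose d b : R)) := by
    intro b hb
    rw [Finset.mem_range] at hb
    have hb' : b ≤ d := Nat.lt_succ_iff.mp hb
    have : (-1 : R) ^ d * (-1) ^ b = (-1) ^ (d - b) := by
      rw [← pow_add]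
      have : d + b = (d - b) + 2 * b := by omega
      rw [this, pow_add, pow_mul]
      simp
    rw [← this]; ring
  rw [Finset.sum_congr rfl hf, ← Finset.mul_sum]
  have hZ := Int.alternating_sum_range_choose (n := d)
  have : (∑ b ∈ Finset.range (d + 1), (-1 : R) ^ b * (Nat.choose d b : R))
      = ((∑ i ∈ Finset.range (d + 1), (-1 : ℤ) ^ i * (Nat.choose d i : ℤ) : ℤ) : R) := by
    push_cast; rfl
  rw [this, hZ]
  by_cases hd : d = 0 <;> simp [hd]

private lemma key_identity {R : Type*} [CommRing R] (t : R) (k m : ℕ)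
    (hm : 1 ≤ m) (hk : m < k) :
    ∑ i ∈ Finset.Icc 1 m, (-t) ^ (m - i) * (Nat.choose (k - i - 1) (m - i) : R) *
      (∑ j ∈ Finset.Icc 1 i, (Nat.choose (k - 1 - j) (i - j) : R) * t ^ (i - j)) = 1 := by
  have swap :
      ∑ i ∈ Finset.Icc 1 m, ∑ j ∈ Finset.Icc 1 i,
          (-t) ^ (m - i) * (Nat.choose (k - i - 1) (m - i) : R) *
            ((Nat.choose (k - 1 - j) (i - j) : R) * t ^ (i - j))
        = ∑ j ∈ Finset.Icc 1 m, ∑ i ∈ Finset.Icc j m,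
          (-t) ^ (m - i) * (Nat.choose (k - i - 1) (m - i) : R) *
            ((Nat.choose (k - 1 - j) (i - j) : R) * t ^ (i - j)) := by
    apply Finset.sum_comm'
    intro i j
    simp only [Finset.mem_Icc]
    omega
  calc ∑ i ∈ Finset.Icc 1 m, (-t) ^ (m - i) * (Nat.choose (k - i - 1) (m - i) : R) *
        (∑ j ∈ Finset.Icc 1 i, (Nat.choose (k - 1 - j) (i - j) : R) * t ^ (i - j))
      = ∑ i ∈ Finset.Icc 1 m, ∑ j ∈ Finset.Icc 1 i,
          (-t) ^ (m - i) * (Nat.choose (k - i - 1) (m - i) : R) *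
            ((Nat.choose (k - 1 - j) (i - j) : R) * t ^ (i - j)) := by
        simp [Finset.mul_sum]
    _ = ∑ j ∈ Finset.Icc 1 m, ∑ i ∈ Finset.Icc j m,
          (-t) ^ (m - i) * (Nat.choose (k - i - 1) (m - i) : R) *
            ((Nat.choose (k - 1 - j) (i - j) : R) * t ^ (i - j)) := swap
    _ = ∑ j ∈ Finset.Icc 1 m, (if m - j = 0 then 1 else 0) := by
        apply Finset.sum_congr rfl
        intro j hj
        rw [Finset.mem_Icc] at hj
        set N := k - 1 - j with hN
        set d := m - j with hd
        have hdN : d ≤ N := by omega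
        rw [← Finset.Ico_add_one_right_eq_Icc, Finset.sum_Ico_eq_sum_range]
        have hrange : m + 1 - j = d + 1 := by omega
        rw [hrange]
        have step : ∀ b ∈ Finset.range (d + 1),
            (-t) ^ (m - (j + b)) * (Nat.choose (k - (j + b) - 1) (m - (j + b)) : R) *
              ((Nat.choose (k - 1 - j) (j + b - j) : R) * t ^ (j + b - j))
            = ((Nat.choose N d : R) * t ^ d) *
                ((-1 : R) ^ (d - b) * (Nat.choose d b : R)) := by
          intro b hb
          rw [Finset.mem_range] at hb
          have hb' : b ≤ d := Nat.lt_succ_iff.mp hb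
          have e1 : m - (j + b) = d - b := by omega
          have e2 : k - (j + b) - 1 = N - b := by omega
          have e3 : j + b - j = b := by omega
          rw [e1, e2, e3]
          have hcm : (Nat.choose N d) * (Nat.choose d b) =
              (Nat.choose N b) * (Nat.choose (N - b) (d - b)) :=
            Nat.choose_mul hb'
          have hcmR : (Nat.choose N d : R) * (Nat.choose d b : R) =
              (Nat.choose N b : R) * (Nat.choose (N - b) (d - b) : R) := by
            exact_mod_cast congrArg (Nat.cast : ℕ → R) hcm
          have hne : (-t) ^ (d - b) = (-1 : R) ^ (d - b) * t ^ (d - b) := by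
            rw [← neg_one_mul, mul_pow]
          have htp : t ^ (d - b) * t ^ b = t ^ d := by
            rw [← pow_add]; congr 1; omega
          calc (-t) ^ (d - b) * (Nat.choose (N - b) (d - b) : R) *
                ((Nat.choose N b : R) * t ^ b)
              = ((Nat.choose N b : R) * (Nat.choose (N - b) (d - b) : R)) *
                  ((-1 : R) ^ (d - b) * (t ^ (d - b) * t ^ b)) := by rw [hne]; ring
            _ = ((Nat.choose N d : R) * (Nat.choose d b : R)) *
                  ((-1 : R) ^ (d - b) * t ^ d) := by rw [← hcmR, htp]
            _ = ((Nat.choose N d : R) * t ^ d) *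
                  ((-1 : R) ^ (d - b) * (Nat.choose d b : R)) := by ring
        rw [Finset.sum_congr rfl step, ← Finset.mul_sum, alt_sum]
        by_cases hd0 : d = 0
        · simp [hd0]
        · simp [hd0]
    _ = 1 := by
        have : ∀ j ∈ Finset.Icc 1 m, (if m - j = 0 then (1:R) else 0)
            = (if j = m then (1:R) else 0) := by
          intro j hj
          rw [Finset.mem_Icc] at hj
          by_cases hjm : j = m
          · simp [hjm]
          · have : m - j ≠ 0 := by omega
            simp [hjm, this]
        rw [Finset.sum_congr rfl this, Finset.sum_ite_eq' (Finset.Icc 1 m) m]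
        simp [hm]

theorem sum_formula_inversion {R : Type*} [CommRing R] (t z : R) (ht : IsUnit t)
    (k n : ℕ) (hn : 1 ≤ n) (hk : n < k) (G : ℕ → R)
    (h : ∀ m : ℕ, 1 ≤ m → m ≤ n →
      ∑ i ∈ Finset.Icc 1 m, (-t) ^ (m - i) * (Nat.choose (k - i - 1) (m - i) : R) * G i = z) :
    G n = (∑ i ∈ Finset.Icc 1 n, (Nat.choose (k - 1 - i) (n - i) : R) * t ^ (n - i)) * z := by
  suffices H : ∀ m, 1 ≤ m → m ≤ n →
      G m = (∑ i ∈ Finset.Icc 1 m, (Nat.choose (k - 1 - i) (m - i) : R) * t ^ (m - i)) * z from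
    H n hn le_rfl
  intro m
  induction m using Nat.strong_induction_on with
  | _ m ih =>
    intro hm1 hmn
    set S : ℕ → R := fun i => ∑ j ∈ Finset.Icc 1 i, (Nat.choose (k - 1 - j) (i - j) : R) * t ^ (i - j)
      with hS
    obtain ⟨mm, rfl⟩ : ∃ mm, m = mm + 1 := ⟨m - 1, by omega⟩
    have hm := h (mm + 1) hm1 hmn
    rw [Finset.sum_Icc_succ_top (by omega)] at hm
    have htop : (-t) ^ (mm + 1 - (mm + 1)) *
        (Nat.choose (k - (mm + 1) - 1) (mm + 1 - (mm + 1)) : R) * G (mm + 1) = G (mm + 1) := by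
      simp
    rw [htop] at hm
    have hsub : ∀ i ∈ Finset.Icc 1 mm,
        (-t) ^ (mm + 1 - i) * (Nat.choose (k - i - 1) (mm + 1 - i) : R) * G i
          = (-t) ^ (mm + 1 - i) * (Nat.choose (k - i - 1) (mm + 1 - i) : R) * (S i * z) := by
      intro i hi
      rw [Finset.mem_Icc] at hi
      rw [ih i (by omega) (by omega) (by omega)]
    rw [Finset.sum_congr rfl hsub] at hm
    have hkey := key_identity t k (mm + 1) hm1 (by omega)
    rw [Finset.sum_Icc_succ_top (by omega)] at hkey
    have htop2 : (-t) ^ (mm + 1 - (mm + 1)) *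
        (Nat.choose (k - (mm + 1) - 1) (mm + 1 - (mm + 1)) : R) * S (mm + 1) = S (mm + 1) := by
      simp
    rw [htop2] at hkey
    -- hm : ∑ c_i * (S i * z) + G (mm+1) = z
    -- hkey : ∑ c_i * S i + S (mm+1) = 1
    have expand : ∑ i ∈ Finset.Icc 1 mm,
        (-t) ^ (mm + 1 - i) * (Nat.choose (k - i - 1) (mm + 1 - i) : R) * (S i * z)
        = (∑ i ∈ Finset.Icc 1 mm,
            (-t) ^ (mm + 1 - i) * (Nat.choose (k - i - 1) (mm + 1 - i) : R) * S i) * z := by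
      rw [Finset.sum_mul]
      exact Finset.sum_congr rfl fun i _ => by ring
    rw [expand] at hm
    have : G (mm + 1) = (1 - ∑ i ∈ Finset.Icc 1 mm,
        (-t) ^ (mm + 1 - i) * (Nat.choose (k - i - 1) (mm + 1 - i) : R) * S i) * z := by
      linear_combination hm
    rw [this]
    have hkey2 : (∑ i ∈ Finset.Icc 1 mm,
        (-t) ^ (mm + 1 - i) * (Nat.choose (k - i - 1) (mm + 1 - i) : R) * S i) + S (mm + 1) = 1 :=
      hkey
    have goalS : (∑ i ∈ Finset.Icc 1 (mm + 1),
        (Nat.choose (k - 1 - i) (mm + 1 - i) : R) * t ^ (mm + 1 - i)) = S (mm + 1) := rfl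
    rw [goalS]
    congr 1
    linear_combination -hkey2
end

section
/- Euler's decomposition formula: for integers k, l ≥ 2, ζ(k)·ζ(l) = ∑_{i=1}^{k} C(k+l-i-1, l-1) · ζ(k+l-i, i) + ∑_{i=1}^{l} C(k+l-i-1, k-1) · ζ(k+l-i, i). -/
open Finset

/-- The Riemann zeta value `ζ(s) = ∑_{m ≥ 1} 1/m^s`. -/
noncomputable def zetaVal (s : ℕ) : ℝ :=
  ∑' m : ℕ, if 1 ≤ m then 1 / (m : ℝ) ^ s else 0

/-- The double zeta value `ζ(a,b) = ∑_{m > n ≥ 1} 1/(m^a n^b)`. -/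
noncomputable def doubleZeta (a b : ℕ) : ℝ :=
  ∑' p : ℕ × ℕ, if 1 ≤ p.2 ∧ p.2 < p.1 then 1 / ((p.1 : ℝ) ^ a * (p.2 : ℝ) ^ b) else 0

/-! ### Auxiliary material: partial fraction decomposition -/

noncomputable def pfS (s x : ℝ) (k L : ℕ) : ℝ :=
  ∑ j ∈ Finset.range k, ((L + j).choose L : ℝ) / (s ^ (L + 1 + j) * x ^ (k - j))

lemma pfS_one (s x : ℝ) (L : ℕ) : pfS s x 1 L = 1 / (s ^ (L + 1) * x) := by
  simp [pfS]

lemma pfS_zero_succ (s x : ℝ) (k : ℕ) :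
    pfS s x (k + 1) 0 = pfS s x k 0 / s + 1 / (s * x ^ (k + 1)) := by
  simp only [pfS, Finset.sum_range_succ', Finset.sum_div]
  congr 1
  · refine Finset.sum_congr rfl fun j hj => ?_
    rw [div_div]
    congr 1
    · norm_num
    · have : k + 1 - (j + 1) = k - j := by omega
      rw [this]; ring
  · norm_num [pow_one]

lemma pfS_succ_succ (s x : ℝ) (k L : ℕ) :
    pfS s x (k + 1) (L + 1) = pfS s x (k + 1) L / s + pfS s x k (L + 1) / s := by
  have h1 : pfS s x (k + 1) L / s
      = ∑ j ∈ Finset.range (k + 1), ((L + j).choose L : ℝ) / (s ^ (L + 2 + j) * x ^ (k + 1 - j)) := by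
    simp only [pfS, Finset.sum_div]
    refine Finset.sum_congr rfl fun j hj => ?_
    rw [div_div]
    congr 1
    ring
  have h2 : pfS s x k (L + 1) / s
      = ∑ j ∈ Finset.range k, ((L + 1 + j).choose (L + 1) : ℝ) / (s ^ (L + 3 + j) * x ^ (k - j)) := by
    simp only [pfS, Finset.sum_div]
    refine Finset.sum_congr rfl fun j hj => ?_
    rw [div_div]
    congr 1
    ring
  rw [h1, h2]
  simp only [pfS]
  rw [Finset.sum_range_succ',
    Finset.sum_range_succ' (fun j => ((L + j).choose L : ℝ) / (s ^ (L + 2 + j) * x ^ (k + 1 - j)))]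
  have pascal : ∀ j ∈ Finset.range k,
      ((L + 1 + (j + 1)).choose (L + 1) : ℝ) / (s ^ (L + 1 + 1 + (j + 1)) * x ^ (k + 1 - (j + 1)))
        = ((L + (j + 1)).choose L : ℝ) / (s ^ (L + 2 + (j + 1)) * x ^ (k + 1 - (j + 1)))
          + ((L + 1 + j).choose (L + 1) : ℝ) / (s ^ (L + 3 + j) * x ^ (k - j)) := by
    intro j hj
    have e1 : k + 1 - (j + 1) = k - j := by omega
    have e2 : L + 1 + 1 + (j + 1) = L + 3 + j := by omega
    have e4 : L + 1 + (j + 1) = (L + 1 + j) + 1 := by omega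
    have e5 : L + (j + 1) = L + 1 + j := by omega
    rw [e1, e2, e4, e5, Nat.choose_succ_succ]
    push_cast
    rw [add_div]
  rw [Finset.sum_congr rfl pascal, Finset.sum_add_distrib]
  simp [Nat.choose_self]
  ring

lemma pf_zero (x y : ℝ) (hx : 0 < x) (hy : 0 < y) :
    ∀ l : ℕ, 1 / (x * y ^ (l + 1)) = pfS (x + y) x 1 l + pfS (x + y) y (l + 1) 0 := by
  have hs : (0:ℝ) < x + y := by linarith
  intro l
  induction l with
  | zero =>
    rw [pfS_one, pfS_one]
    field_simp
    ring
  | succ l ih =>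
    have key : 1 / (x * y ^ (l + 1 + 1))
        = (1 / (x * y ^ (l + 1))) / (x + y) + (1 / y ^ (l + 1 + 1)) / (x + y) := by
      field_simp
      ring
    rw [key, ih, pfS_zero_succ (x + y) y (l + 1), pfS_one, pfS_one]
    rw [add_div]
    have e1 : (1 / ((x + y) ^ (l + 1) * x)) / (x + y) = 1 / ((x + y) ^ (l + 1 + 1) * x) := by
      rw [div_div]; congr 1; ring
    rw [e1]
    field_simp
    ring

lemma pf_main (x y : ℝ) (hx : 0 < x) (hy : 0 < y) :
    ∀ k l : ℕ, 1 / (x ^ (k + 1) * y ^ (l + 1))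
      = pfS (x + y) x (k + 1) l + pfS (x + y) y (l + 1) k := by
  have hs : (0:ℝ) < x + y := by linarith
  intro k
  induction k with
  | zero =>
    intro l
    simpa [pow_one] using pf_zero x y hx hy l
  | succ k ihk =>
    intro l
    induction l with
    | zero =>
      have h := pf_zero y x hy hx (k + 1)
      rw [add_comm y x] at h
      have e : 1 / (x ^ (k + 1 + 1) * y ^ (0 + 1)) = 1 / (y * x ^ (k + 1 + 1)) := by
        rw [pow_one, mul_comm]
      rw [e, h]
      ring
    | succ l ihl =>
      have key : 1 / (x ^ (k + 1 + 1) * y ^ (l + 1 + 1))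
          = (1 / (x ^ (k + 1 + 1) * y ^ (l + 1))) / (x + y)
            + (1 / (x ^ (k + 1) * y ^ (l + 1 + 1))) / (x + y) := by
        field_simp
        ring
      rw [key, ihl, ihk (l + 1)]
      rw [pfS_succ_succ (x + y) x (k + 1) l, pfS_succ_succ (x + y) y (l + 1) k]
      rw [add_div, add_div]
      ring

/-! ### Auxiliary material: reindexing double sums -/

lemma tsum_pair (a b : ℕ) :
    (∑' p : ℕ × ℕ, if 1 ≤ p.1 ∧ 1 ≤ p.2 then
        1 / (((p.1 + p.2 : ℕ) : ℝ) ^ a * (p.1 : ℝ) ^ b) else 0) = doubleZeta a b := by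
  have hinj : Function.Injective (fun p : ℕ × ℕ => (p.1 + p.2, p.1)) := by
    rintro ⟨m, n⟩ ⟨m', n'⟩ h
    simp only [Prod.mk.injEq] at h
    obtain ⟨h1, h2⟩ := h
    exact Prod.ext h2 (by omega)
  have hsupp : (Function.support fun q : ℕ × ℕ =>
      if 1 ≤ q.2 ∧ q.2 < q.1 then 1 / ((q.1 : ℝ) ^ a * (q.2 : ℝ) ^ b) else 0)
      ⊆ Set.range (fun p : ℕ × ℕ => (p.1 + p.2, p.1)) := by
    rintro ⟨M, N⟩ hq
    simp only [Function.mem_support, ne_eq, ite_eq_right_iff, not_forall] at hq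
    obtain ⟨⟨h1, h2⟩, -⟩ := hq
    exact ⟨(N, M - N), Prod.ext (show N + (M - N) = M by omega) rfl⟩
  have key := Function.Injective.tsum_eq hinj hsupp
  rw [doubleZeta, ← key]
  apply tsum_congr
  rintro ⟨m, n⟩
  by_cases h : 1 ≤ m ∧ 1 ≤ n
  · rw [if_pos (by simpa using h), if_pos (by simp; omega)]
  · rw [if_neg (by simpa using h), if_neg (by simp; omega)]

lemma tsum_pair' (a b : ℕ) :
    (∑' p : ℕ × ℕ, if 1 ≤ p.1 ∧ 1 ≤ p.2 then
        1 / (((p.1 + p.2 : ℕ) : ℝ) ^ a * (p.2 : ℝ) ^ b) else 0) = doubleZeta a b := by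
  rw [← tsum_pair a b, ← (Equiv.prodComm ℕ ℕ).tsum_eq]
  apply tsum_congr
  rintro ⟨m, n⟩
  simp only [Equiv.prodComm_apply, Prod.swap_prod_mk]
  by_cases h : 1 ≤ m ∧ 1 ≤ n
  · rw [if_pos (by tauto)]
    have h' : 1 ≤ n ∧ 1 ≤ m := ⟨h.2, h.1⟩
    simp only [h', and_self, if_true, Nat.add_comm n m]
  · rw [if_neg (by tauto)]
    have h' : ¬(1 ≤ n ∧ 1 ≤ m) := fun h'' => h ⟨h''.2, h''.1⟩
    simp only [h', if_false]

lemma zeta_eq (a : ℕ) (ha : 1 ≤ a) : zetaVal a = ∑' m : ℕ, 1 / (m : ℝ) ^ a := by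
  apply tsum_congr
  intro m
  by_cases h : 1 ≤ m
  · rw [if_pos h]
  · have hm : m = 0 := by omega
    rw [if_neg h, hm, Nat.cast_zero, zero_pow (by omega), div_zero]

lemma sum_Icc_eq_sum_range (φ : ℕ → ℝ) (k : ℕ) :
    ∑ i ∈ Finset.Icc 1 k, φ i = ∑ j ∈ Finset.range k, φ (k - j) := by
  refine Finset.sum_nbij' (fun i => k - i) (fun j => k - j) ?_ ?_ ?_ ?_ ?_
  · intro i hi; simp only [Finset.mem_Icc] at hi; simp only [Finset.mem_range]; omega
  · intro j hj; simp only [Finset.mem_range] at hj; simp only [Finset.mem_Icc]; omega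
  · intro i hi; simp only [Finset.mem_Icc] at hi; show k - (k - i) = i; omega
  · intro j hj; simp only [Finset.mem_range] at hj; show k - (k - j) = j; omega
  · intro i hi; simp only [Finset.mem_Icc] at hi; show φ i = φ (k - (k - i)); congr 1; omega

set_option maxHeartbeats 2000000 in
theorem euler_decomposition (k l : ℕ) (hk : 2 ≤ k) (hl : 2 ≤ l) :
    zetaVal k * zetaVal l =
      ∑ i ∈ Finset.Icc 1 k, (Nat.choose (k + l - i - 1) (l - 1) : ℝ) * doubleZeta (k + l - i) i +
        ∑ i ∈ Finset.Icc 1 l,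
          (Nat.choose (k + l - i - 1) (k - 1) : ℝ) * doubleZeta (k + l - i) i := by
  obtain ⟨K, rfl⟩ : ∃ K, k = K + 1 := ⟨k - 1, by omega⟩
  obtain ⟨L, rfl⟩ : ∃ L, l = L + 1 := ⟨l - 1, by omega⟩
  have hK : 1 ≤ K := by omega
  have hL : 1 ≤ L := by omega
  -- the summand functions
  set Gx : ℕ → ℕ × ℕ → ℝ := fun j p =>
    if 1 ≤ p.1 ∧ 1 ≤ p.2 then
      ((L + j).choose L : ℝ) / (((p.1 + p.2 : ℕ) : ℝ) ^ (L + 1 + j) * (p.1 : ℝ) ^ (K + 1 - j))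
    else 0 with hGx_def
  set Gy : ℕ → ℕ × ℕ → ℝ := fun j p =>
    if 1 ≤ p.1 ∧ 1 ≤ p.2 then
      ((K + j).choose K : ℝ) / (((p.1 + p.2 : ℕ) : ℝ) ^ (K + 1 + j) * (p.2 : ℝ) ^ (L + 1 - j))
    else 0 with hGy_def
  set F : ℕ × ℕ → ℝ := fun p => (1 / (p.1 : ℝ) ^ (K + 1)) * (1 / (p.2 : ℝ) ^ (L + 1)) with hF_def
  -- pointwise partial fraction decomposition
  have pointwise : ∀ p : ℕ × ℕ,
      F p = ∑ j ∈ Finset.range (K + 1), Gx j p + ∑ j ∈ Finset.range (L + 1), Gy j p := by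
    rintro ⟨m, n⟩
    by_cases h : 1 ≤ m ∧ 1 ≤ n
    · obtain ⟨hm, hn⟩ := h
      have hm' : (0:ℝ) < m := by exact_mod_cast hm
      have hn' : (0:ℝ) < n := by exact_mod_cast hn
      have hpf := pf_main (m : ℝ) (n : ℝ) hm' hn' K L
      have hF1 : F (m, n) = 1 / ((m : ℝ) ^ (K + 1) * (n : ℝ) ^ (L + 1)) := by
        simp only [hF_def]
        rw [div_mul_div_comm, one_mul]
      rw [hF1, hpf]
      congr 1
      · simp only [pfS, hGx_def, if_pos (⟨hm, hn⟩ : 1 ≤ (m, n).1 ∧ 1 ≤ (m, n).2)]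
        refine Finset.sum_congr rfl fun j hj => ?_
        push_cast
        ring_nf
      · simp only [pfS, hGy_def, if_pos (⟨hm, hn⟩ : 1 ≤ (m, n).1 ∧ 1 ≤ (m, n).2)]
        refine Finset.sum_congr rfl fun j hj => ?_
        push_cast
        ring_nf
    · have h0 : m = 0 ∨ n = 0 := by omega
      have hGx0 : ∀ j, Gx j (m, n) = 0 := fun j => by simp [hGx_def, h]
      have hGy0 : ∀ j, Gy j (m, n) = 0 := fun j => by simp [hGy_def, h]
      simp only [hGx0, hGy0, Finset.sum_const_zero, add_zero]
      rcases h0 with h0 | h0 <;>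
        simp [hF_def, h0, zero_pow (Nat.succ_ne_zero _)]
  -- summability
  have hnorm : ∀ a : ℕ, 2 ≤ a → Summable (fun m : ℕ => ‖1 / (m : ℝ) ^ a‖) := by
    intro a ha
    refine ((Real.summable_one_div_nat_pow (p := a)).mpr (by omega)).congr fun m => ?_
    exact (Real.norm_of_nonneg (by positivity)).symm
  have hF_sum : Summable F :=
    summable_mul_of_summable_norm (hnorm (K + 1) (by omega)) (hnorm (L + 1) (by omega))
  have hGx_nonneg : ∀ j p, 0 ≤ Gx j p := by
    intro j p
    simp only [hGx_def]
    split
    · positivity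
    · exact le_refl 0
  have hGy_nonneg : ∀ j p, 0 ≤ Gy j p := by
    intro j p
    simp only [hGy_def]
    split
    · positivity
    · exact le_refl 0
  have hGx_le : ∀ j ∈ Finset.range (K + 1), ∀ p, Gx j p ≤ F p := by
    intro j hj p
    calc Gx j p ≤ ∑ j' ∈ Finset.range (K + 1), Gx j' p :=
          Finset.single_le_sum (fun i _ => hGx_nonneg i p) hj
      _ ≤ ∑ j' ∈ Finset.range (K + 1), Gx j' p + ∑ j' ∈ Finset.range (L + 1), Gy j' p :=
          le_add_of_nonneg_right (Finset.sum_nonneg fun i _ => hGy_nonneg i p)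
      _ = F p := (pointwise p).symm
  have hGy_le : ∀ j ∈ Finset.range (L + 1), ∀ p, Gy j p ≤ F p := by
    intro j hj p
    calc Gy j p ≤ ∑ j' ∈ Finset.range (L + 1), Gy j' p :=
          Finset.single_le_sum (fun i _ => hGy_nonneg i p) hj
      _ ≤ ∑ j' ∈ Finset.range (K + 1), Gx j' p + ∑ j' ∈ Finset.range (L + 1), Gy j' p :=
          le_add_of_nonneg_left (Finset.sum_nonneg fun i _ => hGx_nonneg i p)
      _ = F p := (pointwise p).symm
  have hGx_sum : ∀ j ∈ Finset.range (K + 1), Summable (Gx j) := fun j hj =>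
    Summable.of_nonneg_of_le (hGx_nonneg j) (hGx_le j hj) hF_sum
  have hGy_sum : ∀ j ∈ Finset.range (L + 1), Summable (Gy j) := fun j hj =>
    Summable.of_nonneg_of_le (hGy_nonneg j) (hGy_le j hj) hF_sum
  -- tsum of each summand is a double zeta value
  have hGx_tsum : ∀ j, (∑' p, Gx j p)
      = ((L + j).choose L : ℝ) * doubleZeta (L + 1 + j) (K + 1 - j) := by
    intro j
    rw [← tsum_pair (L + 1 + j) (K + 1 - j), ← tsum_mul_left]
    apply tsum_congr
    intro p
    simp only [hGx_def]
    split
    · rw [mul_one_div]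
    · rw [mul_zero]
  have hGy_tsum : ∀ j, (∑' p, Gy j p)
      = ((K + j).choose K : ℝ) * doubleZeta (K + 1 + j) (L + 1 - j) := by
    intro j
    rw [← tsum_pair' (K + 1 + j) (L + 1 - j), ← tsum_mul_left]
    apply tsum_congr
    intro p
    simp only [hGy_def]
    split
    · rw [mul_one_div]
    · rw [mul_zero]
  -- the main computation
  have main : zetaVal (K + 1) * zetaVal (L + 1)
      = ∑ j ∈ Finset.range (K + 1), ((L + j).choose L : ℝ) * doubleZeta (L + 1 + j) (K + 1 - j)
        + ∑ j ∈ Finset.range (L + 1), ((K + j).choose K : ℝ) * doubleZeta (K + 1 + j) (L + 1 - j) := by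
    rw [zeta_eq (K + 1) (by omega), zeta_eq (L + 1) (by omega),
      tsum_mul_tsum_of_summable_norm (hnorm (K + 1) (by omega)) (hnorm (L + 1) (by omega))]
    have step1 : (∑' p : ℕ × ℕ, (1 / (p.1 : ℝ) ^ (K + 1)) * (1 / (p.2 : ℝ) ^ (L + 1)))
        = ∑' p : ℕ × ℕ, (∑ j ∈ Finset.range (K + 1), Gx j p
            + ∑ j ∈ Finset.range (L + 1), Gy j p) :=
      tsum_congr pointwise
    rw [step1, Summable.tsum_add (summable_sum hGx_sum) (summable_sum hGy_sum),
      Summable.tsum_finsetSum hGx_sum, Summable.tsum_finsetSum hGy_sum]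
    congr 1
    · exact Finset.sum_congr rfl fun j _ => hGx_tsum j
    · exact Finset.sum_congr rfl fun j _ => hGy_tsum j
  rw [main]
  congr 1
  · rw [sum_Icc_eq_sum_range _ (K + 1)]
    refine Finset.sum_congr rfl fun j hj => ?_
    simp only [Finset.mem_range] at hj
    have e1 : K + 1 + (L + 1) - (K + 1 - j) - 1 = L + j := by omega
    have e2 : K + 1 + (L + 1) - (K + 1 - j) = L + 1 + j := by omega
    have e3 : L + 1 - 1 = L := by omega
    rw [e1, e2, e3]
  · rw [sum_Icc_eq_sum_range _ (L + 1)]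
    refine Finset.sum_congr rfl fun j hj => ?_
    simp only [Finset.mem_range] at hj
    have e1 : K + 1 + (L + 1) - (L + 1 - j) - 1 = K + j := by omega
    have e2 : K + 1 + (L + 1) - (L + 1 - j) = K + 1 + j := by omega
    have e3 : K + 1 - 1 = K := by omega
    rw [e1, e2, e3]
end

section
/- For integers k, l ≥ 2 and a real parameter t, define the interpolated double zeta value ζ^t(a,b) = ζ(a,b) + t·ζ(a+b) for a ≥ 2, b ≥ 1. Then ζ(k)·ζ(l) = ∑_{i=1}^{k} C(k+l-i-1, l-1) · ζ^t(k+l-i, i) + ∑_{i=1}^{l} C(k+l-i-1, k-1) · ζ^t(k+l-i, i) − C(k+l, k) · t · ζ(k+l). -/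
set_option maxHeartbeats 1000000

open Finset

/-- The interpolated double zeta value `ζ^t(a,b) = ζ(a,b) + t·ζ(a+b)`. -/
noncomputable def tDoubleZeta (t : ℝ) (a b : ℕ) : ℝ :=
  doubleZeta a b + t * zetaVal (a + b)

/-! ### Algebraic part: the partial fraction identity -/

/-- Auxiliary sum for the partial fraction identity. -/
noncomputable def Saux (x y : ℝ) (k l : ℕ) : ℝ :=
  ∑ j ∈ range (k + 1), (Nat.choose (l + j) l : ℝ) * x ^ j * y ^ (l + 1) * (x + y) ^ (k - j)

lemma Saux_zero (x y : ℝ) (l : ℕ) : Saux x y 0 l = y ^ (l + 1) := by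
  simp [Saux]

lemma Saux_succ_left (x y : ℝ) (k l : ℕ) :
    Saux x y (k + 1) l = (x + y) * Saux x y k l +
      (Nat.choose (l + (k + 1)) l : ℝ) * x ^ (k + 1) * y ^ (l + 1) := by
  simp only [Saux]
  rw [sum_range_succ, Finset.mul_sum]
  congr 1
  · refine Finset.sum_congr rfl fun j hj => ?_
    have hjk : j ≤ k := by simpa [Nat.lt_succ_iff] using hj
    have : k + 1 - j = (k - j) + 1 := by omega
    rw [this, pow_succ]
    ring
  · simp

lemma Saux_succ_succ (x y : ℝ) (k l : ℕ) :
    Saux x y (k + 1) (l + 1) = y * Saux x y (k + 1) l + x * Saux x y k (l + 1) := by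
  have pascal : ∀ j : ℕ, (Nat.choose (l + 1 + j) (l + 1) : ℝ)
      = (Nat.choose (l + j) l : ℝ) + (Nat.choose (l + j) (l + 1) : ℝ) := by
    intro j
    rw [show l + 1 + j = (l + j) + 1 by omega, Nat.choose_succ_succ', Nat.cast_add]
  rw [Saux]
  have split : ∑ j ∈ range (k + 1 + 1), (Nat.choose (l + 1 + j) (l + 1) : ℝ) * x ^ j * y ^ (l + 1 + 1) * (x + y) ^ (k + 1 - j)
      = (∑ j ∈ range (k + 1 + 1), (Nat.choose (l + j) l : ℝ) * x ^ j * y ^ (l + 1 + 1) * (x + y) ^ (k + 1 - j))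
      + ∑ j ∈ range (k + 1 + 1), (Nat.choose (l + j) (l + 1) : ℝ) * x ^ j * y ^ (l + 1 + 1) * (x + y) ^ (k + 1 - j) := by
    rw [← Finset.sum_add_distrib]
    refine Finset.sum_congr rfl fun j _ => ?_
    rw [pascal j]; ring
  rw [split]
  congr 1
  · rw [Saux, Finset.mul_sum]
    refine Finset.sum_congr rfl fun j _ => ?_
    ring
  · rw [Finset.sum_range_succ' (fun j => (Nat.choose (l + j) (l + 1) : ℝ) * x ^ j * y ^ (l + 1 + 1) * (x + y) ^ (k + 1 - j))]
    have h0 : (Nat.choose (l + 0) (l + 1) : ℝ) = 0 := by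
      simp [Nat.choose_eq_zero_of_lt]
    rw [h0, Saux, Finset.mul_sum]
    simp only [zero_mul, mul_zero, add_zero]
    refine Finset.sum_congr rfl fun j _ => ?_
    rw [show l + (j + 1) = l + 1 + j by omega, show k + 1 - (j + 1) = k - j by omega]
    ring

/-- The partial fraction polynomial identity. -/
lemma Q_identity (x y : ℝ) : ∀ k l : ℕ,
    (x + y) ^ (k + l + 1) = Saux x y k l + Saux y x l k := by
  intro k
  induction k with
  | zero =>
    intro l
    induction l with
    | zero => simp [Saux]; ring
    | succ l ih =>
      have key : (x + y) ^ (0 + (l + 1) + 1) = (x + y) * (x + y) ^ (0 + l + 1) := by ring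
      rw [key, ih, Saux_zero, Saux_succ_left]
      simp [Saux_zero]
      ring
  | succ k ihk =>
    intro l
    induction l with
    | zero =>
      have key : (x + y) ^ (k + 1 + 0 + 1) = (x + y) * (x + y) ^ (k + 0 + 1) := by ring
      rw [key, ihk 0, Saux_succ_left, Saux_zero, Saux_zero]
      simp
      ring
    | succ l ihl =>
      have key : (x + y) ^ (k + 1 + (l + 1) + 1) = x * (x + y) ^ (k + (l + 1) + 1) + y * (x + y) ^ ((k + 1) + l + 1) := by ring
      rw [key, ihk (l + 1), ihl, Saux_succ_succ x y k l, Saux_succ_succ y x l k]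
      ring

/-- The partial fraction identity in divided form. -/
lemma partial_fraction (x y : ℝ) (hx : 0 < x) (hy : 0 < y) (k l : ℕ) :
    (1 / x ^ (k + 1)) * (1 / y ^ (l + 1))
      = (∑ j ∈ range (k + 1), (Nat.choose (l + j) l : ℝ) *
            (1 / ((x + y) ^ (l + 1 + j) * x ^ (k + 1 - j))))
      + ∑ j ∈ range (l + 1), (Nat.choose (k + j) k : ℝ) *
            (1 / ((x + y) ^ (k + 1 + j) * y ^ (l + 1 - j))) := by
  have hx0 : x ≠ 0 := hx.ne'
  have hy0 : y ≠ 0 := hy.ne'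
  have hxy : x + y ≠ 0 := by positivity
  have hQ := Q_identity x y k l
  have hD : x ^ (k + 1) * y ^ (l + 1) * (x + y) ^ (k + l + 1) ≠ 0 := by positivity
  have step1 : (1 / x ^ (k + 1)) * (1 / y ^ (l + 1))
      = (x + y) ^ (k + l + 1) / (x ^ (k + 1) * y ^ (l + 1) * (x + y) ^ (k + l + 1)) := by
    field_simp
  rw [step1]
  set D := x ^ (k + 1) * y ^ (l + 1) * (x + y) ^ (k + l + 1) with hDdef
  rw [hQ, add_div]
  congr 1
  · rw [Saux, Finset.sum_div]
    refine Finset.sum_congr rfl fun j hj => ?_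
    have hjk : j ≤ k := by simpa [Nat.lt_succ_iff] using hj
    have e1 : x ^ (k + 1) = x ^ (k + 1 - j) * x ^ j := by
      rw [← pow_add]; congr 1; omega
    have e2 : (x + y) ^ (k + l + 1) = (x + y) ^ (l + 1 + j) * (x + y) ^ (k - j) := by
      rw [← pow_add]; congr 1; omega
    rw [hDdef, e1, e2]
    have h1 : (x : ℝ) ^ (k + 1 - j) ≠ 0 := pow_ne_zero _ hx0
    have h2 : (x : ℝ) ^ j ≠ 0 := pow_ne_zero _ hx0
    have h3 : (x + y) ^ (l + 1 + j) ≠ 0 := pow_ne_zero _ hxy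
    have h4 : (x + y) ^ (k - j) ≠ 0 := pow_ne_zero _ hxy
    have h5 : (y : ℝ) ^ (l + 1) ≠ 0 := pow_ne_zero _ hy0
    field_simp
  · rw [Saux, Finset.sum_div]
    refine Finset.sum_congr rfl fun j hj => ?_
    have hjl : j ≤ l := by simpa [Nat.lt_succ_iff] using hj
    have e1 : y ^ (l + 1) = y ^ (l + 1 - j) * y ^ j := by
      rw [← pow_add]; congr 1; omega
    have e2 : (x + y) ^ (k + l + 1) = (x + y) ^ (k + 1 + j) * (x + y) ^ (l - j) := by
      rw [← pow_add]; congr 1; omega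
    have e3 : y + x = x + y := add_comm y x
    rw [hDdef, e1, e2, e3]
    have h1 : (y : ℝ) ^ (l + 1 - j) ≠ 0 := pow_ne_zero _ hy0
    have h2 : (y : ℝ) ^ j ≠ 0 := pow_ne_zero _ hy0
    have h3 : (x + y) ^ (k + 1 + j) ≠ 0 := pow_ne_zero _ hxy
    have h4 : (x + y) ^ (l - j) ≠ 0 := pow_ne_zero _ hxy
    have h5 : (x : ℝ) ^ (k + 1) ≠ 0 := pow_ne_zero _ hx0
    field_simp

/-! ### Analytic part -/

lemma zetaVal_eq (s : ℕ) (hs : 1 ≤ s) : zetaVal s = ∑' m : ℕ, 1 / (m : ℝ) ^ s := by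
  unfold zetaVal
  refine tsum_congr fun m => ?_
  rcases Nat.eq_zero_or_pos m with h | h
  · subst h
    simp [zero_pow (by omega : s ≠ 0)]
  · rw [if_pos (by omega : 1 ≤ m)]

/-- Summand for the reindexed double zeta with `x` in the denominator. -/
noncomputable def Gterm (a b : ℕ) (p : ℕ × ℕ) : ℝ :=
  if 1 ≤ p.1 ∧ 1 ≤ p.2 then 1 / (((p.1 : ℝ) + (p.2 : ℝ)) ^ a * (p.1 : ℝ) ^ b) else 0

/-- Summand for the reindexed double zeta with `y` in the denominator. -/
noncomputable def Hterm (a b : ℕ) (p : ℕ × ℕ) : ℝ :=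
  if 1 ≤ p.1 ∧ 1 ≤ p.2 then 1 / (((p.1 : ℝ) + (p.2 : ℝ)) ^ a * (p.2 : ℝ) ^ b) else 0

lemma Gterm_nonneg (a b : ℕ) (p : ℕ × ℕ) : 0 ≤ Gterm a b p := by
  unfold Gterm; split <;> positivity

lemma Hterm_nonneg (a b : ℕ) (p : ℕ × ℕ) : 0 ≤ Hterm a b p := by
  unfold Hterm; split <;> positivity

lemma tsum_Gterm (a b : ℕ) : ∑' p : ℕ × ℕ, Gterm a b p = doubleZeta a b := by
  unfold doubleZeta
  have hinj : Function.Injective (fun p : ℕ × ℕ => (p.1 + p.2, p.1)) := by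
    intro p q h
    simp only [Prod.mk.injEq] at h
    exact Prod.ext (by omega) (by omega)
  have hsupp : Function.support
      (fun p : ℕ × ℕ => if 1 ≤ p.2 ∧ p.2 < p.1 then 1 / ((p.1 : ℝ) ^ a * (p.2 : ℝ) ^ b) else 0)
      ⊆ Set.range (fun p : ℕ × ℕ => (p.1 + p.2, p.1)) := by
    rintro ⟨m, n⟩ hp
    by_cases h : 1 ≤ n ∧ n < m
    · refine ⟨(n, m - n), ?_⟩
      show (n + (m - n), n) = (m, n)
      obtain ⟨h1, h2⟩ := h
      rw [Prod.mk.injEq]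
      exact ⟨by omega, rfl⟩
    · rw [Function.mem_support, if_neg h] at hp
      exact absurd rfl hp
  rw [← Function.Injective.tsum_eq hinj hsupp]
  refine tsum_congr fun p => ?_
  unfold Gterm
  rcases p with ⟨x, y⟩
  by_cases h : 1 ≤ x ∧ 1 ≤ y
  · rw [if_pos (by omega : 1 ≤ x ∧ x < x + y), if_pos h]
    push_cast
    ring
  · rw [if_neg (by omega : ¬(1 ≤ x ∧ x < x + y)), if_neg h]

lemma tsum_Hterm (a b : ℕ) : ∑' p : ℕ × ℕ, Hterm a b p = doubleZeta a b := by
  unfold doubleZeta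
  have hinj : Function.Injective (fun p : ℕ × ℕ => (p.1 + p.2, p.2)) := by
    intro p q h
    simp only [Prod.mk.injEq] at h
    exact Prod.ext (by omega) (by omega)
  have hsupp : Function.support
      (fun p : ℕ × ℕ => if 1 ≤ p.2 ∧ p.2 < p.1 then 1 / ((p.1 : ℝ) ^ a * (p.2 : ℝ) ^ b) else 0)
      ⊆ Set.range (fun p : ℕ × ℕ => (p.1 + p.2, p.2)) := by
    rintro ⟨m, n⟩ hp
    by_cases h : 1 ≤ n ∧ n < m
    · refine ⟨(m - n, n), ?_⟩
      show (m - n + n, n) = (m, n)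
      obtain ⟨h1, h2⟩ := h
      rw [Prod.mk.injEq]
      exact ⟨by omega, rfl⟩
    · rw [Function.mem_support, if_neg h] at hp
      exact absurd rfl hp
  rw [← Function.Injective.tsum_eq hinj hsupp]
  refine tsum_congr fun p => ?_
  unfold Hterm
  rcases p with ⟨x, y⟩
  by_cases h : 1 ≤ x ∧ 1 ≤ y
  · rw [if_pos (by omega : 1 ≤ y ∧ y < x + y), if_pos h]
    push_cast
    ring
  · rw [if_neg (by omega : ¬(1 ≤ y ∧ y < x + y)), if_neg h]

/-- The main analytic identity, in `range` form. -/
lemma mainRange (k l : ℕ) (hk : 1 ≤ k) (hl : 1 ≤ l) :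
    zetaVal (k + 1) * zetaVal (l + 1)
      = (∑ j ∈ range (k + 1), (Nat.choose (l + j) l : ℝ) * doubleZeta (l + 1 + j) (k + 1 - j))
      + ∑ j ∈ range (l + 1), (Nat.choose (k + j) k : ℝ) * doubleZeta (k + 1 + j) (l + 1 - j) := by
  have hf : Summable (fun m : ℕ => 1 / (m : ℝ) ^ (k + 1)) :=
    Real.summable_one_div_nat_pow.mpr (by omega)
  have hg : Summable (fun m : ℕ => 1 / (m : ℝ) ^ (l + 1)) :=
    Real.summable_one_div_nat_pow.mpr (by omega)
  have hfg : Summable (fun p : ℕ × ℕ => (1 / (p.1 : ℝ) ^ (k + 1)) * (1 / (p.2 : ℝ) ^ (l + 1))) :=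
    hf.mul_of_nonneg hg (fun m => by positivity) (fun m => by positivity)
  -- pointwise decomposition
  have pointwise : ∀ p : ℕ × ℕ,
      (1 / (p.1 : ℝ) ^ (k + 1)) * (1 / (p.2 : ℝ) ^ (l + 1))
        = (∑ j ∈ range (k + 1), (Nat.choose (l + j) l : ℝ) * Gterm (l + 1 + j) (k + 1 - j) p)
        + ∑ j ∈ range (l + 1), (Nat.choose (k + j) k : ℝ) * Hterm (k + 1 + j) (l + 1 - j) p := by
    rintro ⟨x, y⟩
    by_cases h : 1 ≤ x ∧ 1 ≤ y
    · have hx : (0 : ℝ) < x := by exact_mod_cast h.1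
      have hy : (0 : ℝ) < y := by exact_mod_cast h.2
      have := partial_fraction (x : ℝ) (y : ℝ) hx hy k l
      rw [this]
      congr 1 <;> refine Finset.sum_congr rfl fun j _ => ?_
      · unfold Gterm; rw [if_pos h]
      · unfold Hterm; rw [if_pos h]
    · have hxy : (x : ℝ) = 0 ∨ (y : ℝ) = 0 := by
        rcases Nat.eq_zero_or_pos x with h1 | h1
        · left; exact_mod_cast h1
        · right
          have : y = 0 := by omega
          exact_mod_cast this
      have hzero : (1 / (x : ℝ) ^ (k + 1)) * (1 / (y : ℝ) ^ (l + 1)) = 0 := by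
        rcases hxy with h' | h' <;> rw [h'] <;>
          simp [zero_pow (by omega : k + 1 ≠ 0), zero_pow (by omega : l + 1 ≠ 0)]
      rw [hzero]
      have hG : ∀ a b, Gterm a b (x, y) = 0 := fun a b => by unfold Gterm; rw [if_neg h]
      have hH : ∀ a b, Hterm a b (x, y) = 0 := fun a b => by unfold Hterm; rw [if_neg h]
      simp [hG, hH]
  -- summability of each summand
  have hsumG : ∀ j ∈ range (k + 1), Summable
      (fun p : ℕ × ℕ => (Nat.choose (l + j) l : ℝ) * Gterm (l + 1 + j) (k + 1 - j) p) := by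
    intro j hj
    refine Summable.of_nonneg_of_le (fun p => mul_nonneg (Nat.cast_nonneg _) (Gterm_nonneg _ _ _)) (fun p => ?_) hfg
    rw [pointwise p]
    have h1 : (Nat.choose (l + j) l : ℝ) * Gterm (l + 1 + j) (k + 1 - j) p
        ≤ ∑ j ∈ range (k + 1), (Nat.choose (l + j) l : ℝ) * Gterm (l + 1 + j) (k + 1 - j) p :=
      Finset.single_le_sum (f := fun j => (Nat.choose (l + j) l : ℝ) * Gterm (l + 1 + j) (k + 1 - j) p)
        (fun i _ => mul_nonneg (Nat.cast_nonneg _) (Gterm_nonneg _ _ _)) hj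
    have h2 : (0 : ℝ) ≤ ∑ j ∈ range (l + 1), (Nat.choose (k + j) k : ℝ) * Hterm (k + 1 + j) (l + 1 - j) p :=
      Finset.sum_nonneg fun i _ => mul_nonneg (Nat.cast_nonneg _) (Hterm_nonneg _ _ _)
    linarith
  have hsumH : ∀ j ∈ range (l + 1), Summable
      (fun p : ℕ × ℕ => (Nat.choose (k + j) k : ℝ) * Hterm (k + 1 + j) (l + 1 - j) p) := by
    intro j hj
    refine Summable.of_nonneg_of_le (fun p => mul_nonneg (Nat.cast_nonneg _) (Hterm_nonneg _ _ _)) (fun p => ?_) hfg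
    rw [pointwise p]
    have h1 : (Nat.choose (k + j) k : ℝ) * Hterm (k + 1 + j) (l + 1 - j) p
        ≤ ∑ j ∈ range (l + 1), (Nat.choose (k + j) k : ℝ) * Hterm (k + 1 + j) (l + 1 - j) p :=
      Finset.single_le_sum (f := fun j => (Nat.choose (k + j) k : ℝ) * Hterm (k + 1 + j) (l + 1 - j) p)
        (fun i _ => mul_nonneg (Nat.cast_nonneg _) (Hterm_nonneg _ _ _)) hj
    have h2 : (0 : ℝ) ≤ ∑ j ∈ range (k + 1), (Nat.choose (l + j) l : ℝ) * Gterm (l + 1 + j) (k + 1 - j) p :=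
      Finset.sum_nonneg fun i _ => mul_nonneg (Nat.cast_nonneg _) (Gterm_nonneg _ _ _)
    linarith
  have hSumsG : Summable (fun p : ℕ × ℕ =>
      ∑ j ∈ range (k + 1), (Nat.choose (l + j) l : ℝ) * Gterm (l + 1 + j) (k + 1 - j) p) :=
    summable_sum fun j hj => hsumG j hj
  have hSumsH : Summable (fun p : ℕ × ℕ =>
      ∑ j ∈ range (l + 1), (Nat.choose (k + j) k : ℝ) * Hterm (k + 1 + j) (l + 1 - j) p) :=
    summable_sum fun j hj => hsumH j hj
  calc zetaVal (k + 1) * zetaVal (l + 1)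
      = (∑' m : ℕ, 1 / (m : ℝ) ^ (k + 1)) * (∑' m : ℕ, 1 / (m : ℝ) ^ (l + 1)) := by
        rw [zetaVal_eq _ (by omega), zetaVal_eq _ (by omega)]
    _ = ∑' p : ℕ × ℕ, (1 / (p.1 : ℝ) ^ (k + 1)) * (1 / (p.2 : ℝ) ^ (l + 1)) :=
        Summable.tsum_mul_tsum hf hg hfg
    _ = ∑' p : ℕ × ℕ,
          ((∑ j ∈ range (k + 1), (Nat.choose (l + j) l : ℝ) * Gterm (l + 1 + j) (k + 1 - j) p)
          + ∑ j ∈ range (l + 1), (Nat.choose (k + j) k : ℝ) * Hterm (k + 1 + j) (l + 1 - j) p) :=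
        tsum_congr pointwise
    _ = (∑' p : ℕ × ℕ, ∑ j ∈ range (k + 1), (Nat.choose (l + j) l : ℝ) * Gterm (l + 1 + j) (k + 1 - j) p)
        + ∑' p : ℕ × ℕ, ∑ j ∈ range (l + 1), (Nat.choose (k + j) k : ℝ) * Hterm (k + 1 + j) (l + 1 - j) p :=
        Summable.tsum_add hSumsG hSumsH
    _ = (∑ j ∈ range (k + 1), ∑' p : ℕ × ℕ, (Nat.choose (l + j) l : ℝ) * Gterm (l + 1 + j) (k + 1 - j) p)
        + ∑ j ∈ range (l + 1), ∑' p : ℕ × ℕ, (Nat.choose (k + j) k : ℝ) * Hterm (k + 1 + j) (l + 1 - j) p := by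
        rw [Summable.tsum_finsetSum hsumG, Summable.tsum_finsetSum hsumH]
    _ = (∑ j ∈ range (k + 1), (Nat.choose (l + j) l : ℝ) * doubleZeta (l + 1 + j) (k + 1 - j))
        + ∑ j ∈ range (l + 1), (Nat.choose (k + j) k : ℝ) * doubleZeta (k + 1 + j) (l + 1 - j) := by
        congr 1 <;> refine Finset.sum_congr rfl fun j _ => ?_
        · rw [tsum_mul_left, tsum_Gterm]
        · rw [tsum_mul_left, tsum_Hterm]

/-! ### Final assembly -/

lemma sum_Icc_reflect (k : ℕ) (f : ℕ → ℝ) :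
    ∑ i ∈ Finset.Icc 1 k, f i = ∑ j ∈ range k, f (k - j) := by
  refine Finset.sum_bij' (fun a _ => k - a) (fun a _ => k - a) ?_ ?_ ?_ ?_ ?_ <;>
      intro a ha <;> simp only [Finset.mem_Icc, Finset.mem_range] at ha ⊢
  · omega
  · omega
  · omega
  · omega
  · congr 1
    omega

lemma choose_range_sum (k l : ℕ) :
    ∑ j ∈ range (k + 1), Nat.choose (l + j) l = Nat.choose (l + k + 1) (l + 1) := by
  rw [← Nat.sum_Icc_choose (l + k) l]
  rw [← Finset.Ico_add_one_right_eq_Icc, Finset.sum_Ico_eq_sum_range]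
  have h : l + k + 1 - l = k + 1 := by omega
  rw [h]

lemma choose_count (k l : ℕ) :
    (∑ j ∈ range (k + 1), Nat.choose (l + j) l) + ∑ j ∈ range (l + 1), Nat.choose (k + j) k
      = Nat.choose (k + l + 2) (k + 1) := by
  rw [choose_range_sum k l, choose_range_sum l k]
  have h1 : Nat.choose (k + l + 1) (l + 1) = Nat.choose (k + l + 1) k := by
    rw [← Nat.choose_symm (show l + 1 ≤ k + l + 1 by omega),
      show k + l + 1 - (l + 1) = k by omega]
  rw [show l + k + 1 = k + l + 1 by omega, h1,
    show k + l + 2 = (k + l + 1) + 1 by omega, Nat.choose_succ_succ (k + l + 1) k]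

theorem euler_decomposition_interpolated (t : ℝ) (k l : ℕ) (hk : 2 ≤ k) (hl : 2 ≤ l) :
    zetaVal k * zetaVal l =
      ∑ i ∈ Finset.Icc 1 k,
          (Nat.choose (k + l - i - 1) (l - 1) : ℝ) * tDoubleZeta t (k + l - i) i +
        ∑ i ∈ Finset.Icc 1 l,
          (Nat.choose (k + l - i - 1) (k - 1) : ℝ) * tDoubleZeta t (k + l - i) i -
        (Nat.choose (k + l) k : ℝ) * t * zetaVal (k + l) := by
  obtain ⟨k', rfl⟩ : ∃ m, k = m + 1 := ⟨k - 1, by omega⟩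
  obtain ⟨l', rfl⟩ : ∃ m, l = m + 1 := ⟨l - 1, by omega⟩
  have hk' : 1 ≤ k' := by omega
  have hl' : 1 ≤ l' := by omega
  have e1 : ∑ i ∈ Finset.Icc 1 (k' + 1),
        (Nat.choose (k' + 1 + (l' + 1) - i - 1) (l' + 1 - 1) : ℝ) * tDoubleZeta t (k' + 1 + (l' + 1) - i) i
      = (∑ j ∈ range (k' + 1), (Nat.choose (l' + j) l' : ℝ) * doubleZeta (l' + 1 + j) (k' + 1 - j))
        + (∑ j ∈ range (k' + 1), (Nat.choose (l' + j) l' : ℝ)) * (t * zetaVal (k' + l' + 2)) := by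
    rw [sum_Icc_reflect (k' + 1)
      (fun i => (Nat.choose (k' + 1 + (l' + 1) - i - 1) (l' + 1 - 1) : ℝ) * tDoubleZeta t (k' + 1 + (l' + 1) - i) i)]
    rw [Finset.sum_mul, ← Finset.sum_add_distrib]
    refine Finset.sum_congr rfl fun j hj => ?_
    have hj' : j ≤ k' := by simpa [Nat.lt_succ_iff] using hj
    rw [show k' + 1 + (l' + 1) - (k' + 1 - j) - 1 = l' + j by omega]
    rw [show k' + 1 + (l' + 1) - (k' + 1 - j) = l' + 1 + j by omega]
    rw [show l' + 1 - 1 = l' by omega]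
    rw [tDoubleZeta, show l' + 1 + j + (k' + 1 - j) = k' + l' + 2 by omega]
    ring
  have e2 : ∑ i ∈ Finset.Icc 1 (l' + 1),
        (Nat.choose (k' + 1 + (l' + 1) - i - 1) (k' + 1 - 1) : ℝ) * tDoubleZeta t (k' + 1 + (l' + 1) - i) i
      = (∑ j ∈ range (l' + 1), (Nat.choose (k' + j) k' : ℝ) * doubleZeta (k' + 1 + j) (l' + 1 - j))
        + (∑ j ∈ range (l' + 1), (Nat.choose (k' + j) k' : ℝ)) * (t * zetaVal (k' + l' + 2)) := by
    rw [sum_Icc_reflect (l' + 1)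
      (fun i => (Nat.choose (k' + 1 + (l' + 1) - i - 1) (k' + 1 - 1) : ℝ) * tDoubleZeta t (k' + 1 + (l' + 1) - i) i)]
    rw [Finset.sum_mul, ← Finset.sum_add_distrib]
    refine Finset.sum_congr rfl fun j hj => ?_
    have hj' : j ≤ l' := by simpa [Nat.lt_succ_iff] using hj
    rw [show k' + 1 + (l' + 1) - (l' + 1 - j) - 1 = k' + j by omega]
    rw [show k' + 1 + (l' + 1) - (l' + 1 - j) = k' + 1 + j by omega]
    rw [show k' + 1 - 1 = k' by omega]
    rw [tDoubleZeta, show k' + 1 + j + (l' + 1 - j) = k' + l' + 2 by omega]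
    ring
  have ccount : (∑ j ∈ range (k' + 1), (Nat.choose (l' + j) l' : ℝ))
      + ∑ j ∈ range (l' + 1), (Nat.choose (k' + j) k' : ℝ)
      = (Nat.choose (k' + l' + 2) (k' + 1) : ℝ) := by
    rw [← Nat.cast_sum, ← Nat.cast_sum, ← Nat.cast_add, choose_count]
  rw [e1, e2]
  rw [show k' + 1 + (l' + 1) = k' + l' + 2 by omega]
  rw [mainRange k' l' hk' hl']
  linear_combination (-(t * zetaVal (k' + l' + 2))) * ccount
end

section
/- For every integer k ≥ 3 and real parameter t, the depth-two sum formula for interpolated double zeta values holds: ∑_{a=2}^{k-1} ζ^t(a, k-a) = (1 + (k-2)·t) · ζ(k), where ζ^t(a,b) = ζ(a,b) + t·ζ(a+b). -/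
open Finset

namespace SumFormulaProofAux

open Filter Topology ENNReal


/-- Harmonic number `H n = ∑_{j<n} 1/(j+1)`. -/
noncomputable def H (n : ℕ) : ℝ := ∑ j ∈ Finset.range n, 1 / ((j : ℝ) + 1)

lemma H_nonneg (n : ℕ) : 0 ≤ H n := by
  unfold H; positivity

lemma H_succ (n : ℕ) : H (n + 1) = H n + 1 / ((n : ℝ) + 1) := by
  unfold H; rw [Finset.sum_range_succ]

/-- Basic telescoping series. -/
lemma tele (a : ℕ) :
    HasSum (fun d : ℕ => 1 / ((d : ℝ) + 1 + a) - 1 / ((d : ℝ) + 2 + a))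
      (1 / (1 + (a : ℝ))) := by
  have hnn : ∀ d : ℕ, 0 ≤ 1 / ((d : ℝ) + 1 + a) - 1 / ((d : ℝ) + 2 + a) := by
    intro d
    have h1 : (0:ℝ) < (d : ℝ) + 1 + a := by positivity
    have h2 : ((d : ℝ) + 1 + a) ≤ (d : ℝ) + 2 + a := by linarith
    have := one_div_le_one_div_of_le h1 h2
    linarith
  rw [hasSum_iff_tendsto_nat_of_nonneg hnn]
  have hps : ∀ n : ℕ, ∑ d ∈ Finset.range n,
      (1 / ((d : ℝ) + 1 + a) - 1 / ((d : ℝ) + 2 + a))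
      = 1 / (1 + (a:ℝ)) - 1 / ((n:ℝ) + 1 + a) := by
    intro n
    have h := Finset.sum_range_sub' (fun i : ℕ => 1 / ((i : ℝ) + 1 + a)) n
    have e1 : ∑ d ∈ Finset.range n, (1 / ((d : ℝ) + 1 + a) - 1 / ((d : ℝ) + 2 + a))
        = ∑ i ∈ Finset.range n, (1 / ((i : ℝ) + 1 + a) - 1 / (((i+1 : ℕ) : ℝ) + 1 + a)) := by
      apply Finset.sum_congr rfl; intro i _; push_cast; ring_nf
    rw [e1, h]
    norm_num
  simp only [hps]
  have h0 : Tendsto (fun n : ℕ => 1 / ((n:ℝ) + 1 + a)) atTop (𝓝 0) := by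
    simp only [one_div]
    apply Filter.Tendsto.inv_tendsto_atTop
    apply Filter.tendsto_atTop_add_const_right
    apply Filter.tendsto_atTop_add_const_right
    exact tendsto_natCast_atTop_atTop
  have := tendsto_const_nhds (x := 1 / (1 + (a:ℝ))) (f := atTop (α := ℕ)) |>.sub h0
  simpa using this







/-- Inner telescoping evaluation. -/
lemma innerHasSum (N : ℕ) :
    HasSum (fun d : ℕ => ((N:ℝ) + 1) / (((d:ℝ) + 1) * ((d:ℝ) + 2 + N))) (H (N + 1)) := by
  have hs := hasSum_sum (s := Finset.range (N+1))
    (f := fun (j : ℕ) (d : ℕ) => 1 / ((d : ℝ) + 1 + j) - 1 / ((d : ℝ) + 2 + j))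
    (a := fun (j : ℕ) => 1 / (1 + (j:ℝ))) (fun j _ => tele j)
  have hval : ∑ j ∈ Finset.range (N+1), 1 / (1 + (j:ℝ)) = H (N+1) := by
    unfold H; apply Finset.sum_congr rfl; intro j _; ring_nf
  rw [hval] at hs
  have hfun : (fun d : ℕ => ((N:ℝ) + 1) / (((d:ℝ) + 1) * ((d:ℝ) + 2 + N)))
      = fun d : ℕ => ∑ j ∈ Finset.range (N+1),
          (1 / ((d : ℝ) + 1 + j) - 1 / ((d : ℝ) + 2 + j)) := by
    funext d
    have htel := Finset.sum_range_sub' (fun j : ℕ => 1 / ((d : ℝ) + 1 + j)) (N+1)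
    have e1 : ∑ j ∈ Finset.range (N+1), (1 / ((d : ℝ) + 1 + j) - 1 / ((d : ℝ) + 2 + j))
        = ∑ j ∈ Finset.range (N+1), (1 / ((d : ℝ) + 1 + j) - 1 / (((j+1 : ℕ):ℝ) + 1 + (d:ℝ))) := by
      apply Finset.sum_congr rfl; intro j _; push_cast; ring_nf
    have e2 : ∑ j ∈ Finset.range (N+1), (1 / ((d : ℝ) + 1 + j) - 1 / (((j+1 : ℕ):ℝ) + 1 + (d:ℝ)))
        = ∑ j ∈ Finset.range (N+1), (1 / ((d : ℝ) + 1 + j) - 1 / (((d:ℝ)) + 1 + ((j+1 : ℕ):ℝ))) := by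
      apply Finset.sum_congr rfl; intro j _; ring_nf
    rw [e1, e2, htel]
    have h1 : (0:ℝ) < (d:ℝ) + 1 := by positivity
    have h2 : (0:ℝ) < (d:ℝ) + 2 + N := by positivity
    push_cast
    have e3 : (d:ℝ) + 1 + 0 = (d:ℝ) + 1 := by ring
    have e4 : (d:ℝ) + 1 + ((N:ℝ) + 1) = (d:ℝ) + 2 + N := by ring
    rw [e3, e4, div_sub_div _ _ (ne_of_gt h1) (ne_of_gt h2)]
    congr 1
    ring
  rw [hfun]
  exact hs









/-- Inner sum for the `E`-series. -/
lemma innerE (k n : ℕ) (hk : 3 ≤ k) :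
    HasSum (fun d : ℕ => 1 / (((n:ℝ) + 1) ^ (k-2) * ((d:ℝ) + 1) * ((n:ℝ) + (d:ℝ) + 2)))
      (H (n + 1) / ((n:ℝ) + 1) ^ (k-1)) := by
  have h := (innerHasSum n).mul_left (1 / ((n:ℝ) + 1) ^ (k-1))
  have hfun : (fun d : ℕ => 1 / ((n:ℝ) + 1) ^ (k-1) *
        (((n:ℝ) + 1) / (((d:ℝ) + 1) * ((d:ℝ) + 2 + n))))
      = fun d : ℕ => 1 / (((n:ℝ) + 1) ^ (k-2) * ((d:ℝ) + 1) * ((n:ℝ) + (d:ℝ) + 2)) := by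
    funext d
    have hp : ((n:ℝ) + 1) ^ (k-1) = ((n:ℝ) + 1) ^ (k-2) * ((n:ℝ) + 1) := by
      rw [← pow_succ]
      congr 1
      omega
    rw [hp]
    have h1 : ((n:ℝ) + 1) ≠ 0 := by positivity
    have h2 : ((n:ℝ) + 1) ^ (k-2) ≠ 0 := by positivity
    have h3 : ((d:ℝ) + 1) ≠ 0 := by positivity
    have h4 : ((d:ℝ) + 2 + n) ≠ 0 := by positivity
    field_simp
    ring
  rw [hfun] at h
  have : 1 / ((n:ℝ) + 1) ^ (k-1) * H (n+1) = H (n+1) / ((n:ℝ) + 1) ^ (k-1) := by ring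
  rwa [this] at h

/-- The convergent upper bound series for `B`-finiteness. -/
lemma boundHasSum (n : ℕ) :
    HasSum (fun d : ℕ => 1 / (((n:ℝ)+1) * (((n:ℝ)+(d:ℝ)+1) * ((n:ℝ)+(d:ℝ)+2))))
      (1 / (((n:ℝ)+1) * ((n:ℝ)+1))) := by
  have h := (tele n).mul_left (1 / ((n:ℝ) + 1))
  have hfun : (fun d : ℕ => 1 / ((n:ℝ) + 1) *
        (1 / ((d : ℝ) + 1 + n) - 1 / ((d : ℝ) + 2 + n)))
      = fun d : ℕ => 1 / (((n:ℝ)+1) * (((n:ℝ)+(d:ℝ)+1) * ((n:ℝ)+(d:ℝ)+2))) := by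
    funext d
    have h1 : ((n:ℝ) + 1) ≠ 0 := by positivity
    have h3 : ((d:ℝ) + 1 + n) ≠ 0 := by positivity
    have h4 : ((d:ℝ) + 2 + n) ≠ 0 := by positivity
    have e : (1 : ℝ) / ((d : ℝ) + 1 + n) - 1 / ((d : ℝ) + 2 + n)
        = 1 / (((n:ℝ)+(d:ℝ)+1) * ((n:ℝ)+(d:ℝ)+2)) := by
      field_simp
      ring
    rw [e, div_mul_div_comm, one_mul]
  rw [hfun] at h
  have : 1 / ((n:ℝ) + 1) * (1 / (1 + (n:ℝ))) = 1 / (((n:ℝ)+1) * ((n:ℝ)+1)) := by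
    rw [div_mul_div_comm, one_mul]
    ring_nf
  rwa [this] at h

/-- Geometric-sum identity. -/
lemma geo (x y : ℝ) (hx : x ≠ 0) (hy : y ≠ 0) (hxy : x - y ≠ 0) (j : ℕ) :
    ∑ i ∈ Finset.range (j+1), 1 / (x ^ (i+2) * y ^ (j+1-i))
      = 1 / ((x-y) * x * y ^ (j+1)) - 1 / ((x-y) * x ^ (j+2)) := by
  induction j with
  | zero =>
      norm_num
      field_simp
  | succ j ih =>
      rw [Finset.sum_range_succ]
      have h1 : ∀ i ∈ Finset.range (j+1),
          1 / (x ^ (i+2) * y ^ (j+2-i)) = (1/y) * (1 / (x ^ (i+2) * y ^ (j+1-i))) := by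
        intro i hi
        rw [Finset.mem_range] at hi
        have e : j + 2 - i = (j + 1 - i) + 1 := by omega
        rw [e, pow_succ]
        field_simp
        ring
      rw [Finset.sum_congr rfl h1, ← Finset.mul_sum, ih]
      rw [show j + 2 - (j+1) = 1 by omega]
      have hxp : x ^ (j+2) ≠ 0 := pow_ne_zero _ hx
      have hyp : y ^ (j+1) ≠ 0 := pow_ne_zero _ hy
      field_simp
      ring





/-- Master pointwise identity: `G + b = e` in the `(n,d)` coordinates. -/
lemma master (k : ℕ) (hk : 3 ≤ k) (n d : ℕ) :
    (∑ a ∈ Finset.Icc 2 (k-1),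
        1 / (((n:ℝ)+(d:ℝ)+2) ^ a * ((n:ℝ)+1) ^ (k-a)))
      + 1 / (((d:ℝ)+1) * ((n:ℝ)+(d:ℝ)+2) ^ (k-1))
    = 1 / (((n:ℝ)+1) ^ (k-2) * ((d:ℝ)+1) * ((n:ℝ)+(d:ℝ)+2)) := by
  obtain ⟨j, rfl⟩ : ∃ j, k = j + 3 := ⟨k - 3, by omega⟩
  set x : ℝ := (n:ℝ)+(d:ℝ)+2 with hxdef
  set y : ℝ := (n:ℝ)+1 with hydef
  have hx : x ≠ 0 := by positivity
  have hy : y ≠ 0 := by positivity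
  have hxy : x - y = (d:ℝ)+1 := by rw [hxdef, hydef]; ring
  have hxy' : x - y ≠ 0 := by rw [hxy]; positivity
  have hIcc : ∑ a ∈ Finset.Icc 2 (j+3-1), 1 / (x ^ a * y ^ (j+3-a))
      = ∑ i ∈ Finset.range (j+1), 1 / (x ^ (i+2) * y ^ (j+1-i)) := by
    rw [show j+3-1 = j+2 by omega]
    apply Finset.sum_nbij' (fun a => a - 2) (fun i => i + 2)
    · intro a ha; rw [Finset.mem_Icc] at ha; rw [Finset.mem_range]; omega
    · intro i hi; rw [Finset.mem_range] at hi; rw [Finset.mem_Icc]; omega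
    · intro a ha; rw [Finset.mem_Icc] at ha; omega
    · intro i hi; omega
    · intro a ha
      rw [Finset.mem_Icc] at ha
      have e1 : a - 2 + 2 = a := by omega
      have e2 : j + 1 - (a - 2) = j + 3 - a := by omega
      rw [e1, e2]
  rw [hIcc, geo x y hx hy hxy' j, hxy]
  rw [show j+3-1 = j+2 by omega, show j+3-2 = j+1 by omega]
  have hd1 : ((d:ℝ)+1) ≠ 0 := by positivity
  have hxp : x ^ (j+2) ≠ 0 := pow_ne_zero _ hx
  have hyp : y ^ (j+1) ≠ 0 := pow_ne_zero _ hy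
  field_simp
  ring



/-- toReal of sum of ofReal. -/
lemma tsum_ofReal_toReal {α : Type*} {g : α → ℝ} (hg : ∀ x, 0 ≤ g x) :
    (∑' x, ENNReal.ofReal (g x)).toReal = ∑' x, g x := by
  rw [ENNReal.tsum_toReal_eq (fun a => ENNReal.ofReal_ne_top)]
  exact tsum_congr fun a => ENNReal.toReal_ofReal (hg a)

/-- Summability of shifted p-series. -/
lemma summable_shift (s : ℕ) (hs : 2 ≤ s) :
    Summable (fun n : ℕ => 1 / ((n:ℝ) + 1) ^ s) := by
  have h : Summable (fun n : ℕ => 1 / (n : ℝ) ^ s) :=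
    Real.summable_one_div_nat_pow.mpr (by omega)
  have := (summable_nat_add_iff (f := fun n : ℕ => 1 / (n : ℝ) ^ s) 1).mpr h
  refine this.congr fun n => ?_
  push_cast
  ring_nf

/-- Change of coordinates for the double zeta ENNReal sum. -/
lemma Dcoord (a b : ℕ) :
    (∑' p : ℕ × ℕ, ENNReal.ofReal
        (if 1 ≤ p.2 ∧ p.2 < p.1 then 1 / ((p.1 : ℝ) ^ a * (p.2 : ℝ) ^ b) else 0))
    = ∑' q : ℕ × ℕ, ENNReal.ofReal
        (1 / (((q.1:ℝ) + (q.2:ℝ) + 2) ^ a * ((q.1:ℝ) + 1) ^ b)) := by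
  have hinj : Function.Injective (fun q : ℕ × ℕ => (q.1 + q.2 + 2, q.1 + 1)) := by
    intro q r h
    simp only [Prod.mk.injEq] at h
    obtain ⟨h1, h2⟩ := h
    exact Prod.ext (by omega) (by omega)
  have hsupp : Function.support (fun p : ℕ × ℕ => ENNReal.ofReal
        (if 1 ≤ p.2 ∧ p.2 < p.1 then 1 / ((p.1 : ℝ) ^ a * (p.2 : ℝ) ^ b) else 0))
      ⊆ Set.range (fun q : ℕ × ℕ => (q.1 + q.2 + 2, q.1 + 1)) := by
    intro p hp
    simp only [Function.mem_support] at hp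
    by_cases hg : 1 ≤ p.2 ∧ p.2 < p.1
    · refine ⟨(p.2 - 1, p.1 - p.2 - 1), ?_⟩
      show (p.2 - 1 + (p.1 - p.2 - 1) + 2, p.2 - 1 + 1) = p
      exact Prod.ext (by omega) (by omega)
    · rw [if_neg hg] at hp; simp at hp
  rw [← hinj.tsum_eq hsupp]
  apply tsum_congr
  intro q
  have hg : 1 ≤ q.1 + 1 ∧ q.1 + 1 < q.1 + q.2 + 2 := ⟨by omega, by omega⟩
  simp only [if_pos hg]
  congr 1
  push_cast
  ring_nf

/-- Change of coordinates for the zeta ENNReal sum. -/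
lemma Zcoord (s : ℕ) :
    (∑' m : ℕ, ENNReal.ofReal (if 1 ≤ m then 1 / (m : ℝ) ^ s else 0))
    = ∑' n : ℕ, ENNReal.ofReal (1 / ((n:ℝ) + 1) ^ s) := by
  have hinj : Function.Injective (fun n : ℕ => n + 1) := fun a b h => by simpa using h
  have hsupp : Function.support (fun m : ℕ => ENNReal.ofReal
        (if 1 ≤ m then 1 / (m : ℝ) ^ s else 0))
      ⊆ Set.range (fun n : ℕ => n + 1) := by
    intro m hm
    simp only [Function.mem_support] at hm
    by_cases hg : 1 ≤ m
    · exact ⟨m - 1, show m - 1 + 1 = m by omega⟩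
    · rw [if_neg hg] at hm; simp at hm
  rw [← hinj.tsum_eq hsupp]
  apply tsum_congr
  intro n
  rw [if_pos (by omega : 1 ≤ n + 1)]
  congr 2
  push_cast
  ring



noncomputable def Denn (a b : ℕ) : ℝ≥0∞ :=
  ∑' p : ℕ × ℕ, ENNReal.ofReal
    (if 1 ≤ p.2 ∧ p.2 < p.1 then 1 / ((p.1 : ℝ) ^ a * (p.2 : ℝ) ^ b) else 0)

noncomputable def Zenn (s : ℕ) : ℝ≥0∞ :=
  ∑' m : ℕ, ENNReal.ofReal (if 1 ≤ m then 1 / (m : ℝ) ^ s else 0)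

lemma DennCoord (a b : ℕ) :
    Denn a b = ∑' q : ℕ × ℕ, ENNReal.ofReal
        (1 / (((q.1:ℝ) + (q.2:ℝ) + 2) ^ a * ((q.1:ℝ) + 1) ^ b)) := Dcoord a b

lemma ZennCoord (s : ℕ) :
    Zenn s = ∑' n : ℕ, ENNReal.ofReal (1 / ((n:ℝ) + 1) ^ s) := Zcoord s






/-- The second sum as a double ENNReal sum, via the `(j,d) ↦ (j+d+1, j)` reindexing. -/
lemma Bg_eval (k : ℕ) (hk : 3 ≤ k) :
    (∑' n : ℕ, ENNReal.ofReal (H n / ((n:ℝ) + 1) ^ (k-1)))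
    = ∑' q : ℕ × ℕ, ENNReal.ofReal
        (1 / (((q.1:ℝ) + 1) * ((q.1:ℝ) + (q.2:ℝ) + 2) ^ (k-1))) := by
  have step1 : ∀ n : ℕ, ENNReal.ofReal (H n / ((n:ℝ) + 1) ^ (k-1))
      = ∑' j : ℕ, (if j < n then
          ENNReal.ofReal (1 / (((j:ℝ) + 1) * ((n:ℝ) + 1) ^ (k-1))) else 0) := by
    intro n
    have hsum : H n / ((n:ℝ) + 1) ^ (k-1)
        = ∑ j ∈ Finset.range n, 1 / (((j:ℝ) + 1) * ((n:ℝ) + 1) ^ (k-1)) := by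
      rw [H, Finset.sum_div]
      apply Finset.sum_congr rfl
      intro j _
      rw [div_div]
    rw [hsum, ENNReal.ofReal_sum_of_nonneg (fun j _ => by positivity)]
    rw [tsum_eq_sum (s := Finset.range n) (f := fun j => if j < n then
        ENNReal.ofReal (1 / (((j:ℝ) + 1) * ((n:ℝ) + 1) ^ (k-1))) else 0)
      (fun j hj => by
        simp only [Finset.mem_range, not_lt] at hj
        exact if_neg (by omega))]
    apply Finset.sum_congr rfl
    intro j hj
    rw [if_pos (Finset.mem_range.mp hj)]
  calc (∑' n : ℕ, ENNReal.ofReal (H n / ((n:ℝ) + 1) ^ (k-1)))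
      = ∑' (n : ℕ) (j : ℕ), (if j < n then
          ENNReal.ofReal (1 / (((j:ℝ) + 1) * ((n:ℝ) + 1) ^ (k-1))) else 0) := by
        exact tsum_congr step1
    _ = ∑' p : ℕ × ℕ, (if p.2 < p.1 then
          ENNReal.ofReal (1 / (((p.2:ℝ) + 1) * ((p.1:ℝ) + 1) ^ (k-1))) else 0) := by
        rw [ENNReal.tsum_prod']
    _ = ∑' q : ℕ × ℕ, ENNReal.ofReal
        (1 / (((q.1:ℝ) + 1) * ((q.1:ℝ) + (q.2:ℝ) + 2) ^ (k-1))) := by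
        have hinj : Function.Injective (fun q : ℕ × ℕ => (q.1 + q.2 + 1, q.1)) := by
          intro q r h
          simp only [Prod.mk.injEq] at h
          exact Prod.ext h.2 (by omega)
        have hsupp : Function.support (fun p : ℕ × ℕ => (if p.2 < p.1 then
              ENNReal.ofReal (1 / (((p.2:ℝ) + 1) * ((p.1:ℝ) + 1) ^ (k-1))) else 0))
            ⊆ Set.range (fun q : ℕ × ℕ => (q.1 + q.2 + 1, q.1)) := by
          intro p hp
          simp only [Function.mem_support] at hp
          by_cases hg : p.2 < p.1
          · refine ⟨(p.2, p.1 - p.2 - 1), ?_⟩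
            show (p.2 + (p.1 - p.2 - 1) + 1, p.2) = p
            exact Prod.ext (by omega) rfl
          · rw [if_neg hg] at hp; simp at hp
        rw [← hinj.tsum_eq hsupp]
        apply tsum_congr
        intro q
        show (if q.1 < q.1 + q.2 + 1 then
            ENNReal.ofReal (1 / (((q.1:ℝ) + 1) * (((q.1 + q.2 + 1 : ℕ):ℝ) + 1) ^ (k-1))) else 0)
          = _
        rw [if_pos (by omega)]
        congr 3
        push_cast
        ring

/-- Evaluation of the `E`-series. -/
lemma Esum (k : ℕ) (hk : 3 ≤ k) :
    (∑' q : ℕ × ℕ, ENNReal.ofReal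
        (1 / (((q.1:ℝ) + 1) ^ (k-2) * ((q.2:ℝ) + 1) * ((q.1:ℝ) + (q.2:ℝ) + 2))))
    = (∑' n : ℕ, ENNReal.ofReal (1 / ((n:ℝ) + 1) ^ k))
      + ∑' q : ℕ × ℕ, ENNReal.ofReal
          (1 / (((q.1:ℝ) + 1) * ((q.1:ℝ) + (q.2:ℝ) + 2) ^ (k-1))) := by
  rw [ENNReal.tsum_prod']
  have inner : ∀ n : ℕ, (∑' d : ℕ, ENNReal.ofReal
        (1 / (((n:ℝ) + 1) ^ (k-2) * ((d:ℝ) + 1) * ((n:ℝ) + (d:ℝ) + 2))))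
      = ENNReal.ofReal (H (n+1) / ((n:ℝ) + 1) ^ (k-1)) := by
    intro n
    rw [← ENNReal.ofReal_tsum_of_nonneg (fun d => by positivity)
        (innerE k n hk).summable]
    congr 1
    exact (innerE k n hk).tsum_eq
  calc (∑' (n : ℕ) (d : ℕ), ENNReal.ofReal
        (1 / (((n:ℝ) + 1) ^ (k-2) * ((d:ℝ) + 1) * ((n:ℝ) + (d:ℝ) + 2))))
      = ∑' n : ℕ, ENNReal.ofReal (H (n+1) / ((n:ℝ) + 1) ^ (k-1)) := tsum_congr inner
    _ = ∑' n : ℕ, (ENNReal.ofReal (1 / ((n:ℝ) + 1) ^ k)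
          + ENNReal.ofReal (H n / ((n:ℝ) + 1) ^ (k-1))) := by
        apply tsum_congr
        intro n
        rw [← ENNReal.ofReal_add (by positivity) (by
          have := H_nonneg n; positivity)]
        congr 1
        have hp : ((n:ℝ) + 1) ^ k = ((n:ℝ) + 1) ^ (k-1) * ((n:ℝ) + 1) := by
          rw [← pow_succ]; congr 1; omega
        have h1 : ((n:ℝ) + 1) ≠ 0 := by positivity
        have h2 : ((n:ℝ) + 1) ^ (k-1) ≠ 0 := by positivity
        rw [H_succ n, hp]
        field_simp
        ring
    _ = (∑' n : ℕ, ENNReal.ofReal (1 / ((n:ℝ) + 1) ^ k))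
          + ∑' n : ℕ, ENNReal.ofReal (H n / ((n:ℝ) + 1) ^ (k-1)) := ENNReal.tsum_add
    _ = _ := by rw [Bg_eval k hk]

/-- Swap of coordinates for the `B`-series. -/
lemma Bswap (k : ℕ) :
    (∑' q : ℕ × ℕ, ENNReal.ofReal
        (1 / (((q.2:ℝ) + 1) * ((q.1:ℝ) + (q.2:ℝ) + 2) ^ (k-1))))
    = ∑' q : ℕ × ℕ, ENNReal.ofReal
        (1 / (((q.1:ℝ) + 1) * ((q.1:ℝ) + (q.2:ℝ) + 2) ^ (k-1))) := by
  rw [← (Equiv.prodComm ℕ ℕ).tsum_eq (fun q : ℕ × ℕ => ENNReal.ofReal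
        (1 / (((q.1:ℝ) + 1) * ((q.1:ℝ) + (q.2:ℝ) + 2) ^ (k-1))))]
  apply tsum_congr
  intro q
  simp only [Equiv.prodComm_apply, Prod.fst_swap, Prod.snd_swap]
  congr 3
  ring

/-- Finiteness of the `B`-series. -/
lemma Bfin (k : ℕ) (hk : 3 ≤ k) :
    (∑' q : ℕ × ℕ, ENNReal.ofReal
        (1 / (((q.1:ℝ) + 1) * ((q.1:ℝ) + (q.2:ℝ) + 2) ^ (k-1)))) ≠ ⊤ := by
  have hb : ∀ q : ℕ × ℕ, ENNReal.ofReal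
        (1 / (((q.1:ℝ) + 1) * ((q.1:ℝ) + (q.2:ℝ) + 2) ^ (k-1)))
      ≤ ENNReal.ofReal
        (1 / (((q.1:ℝ)+1) * (((q.1:ℝ)+(q.2:ℝ)+1) * ((q.1:ℝ)+(q.2:ℝ)+2)))) := by
    intro ⟨n, d⟩
    apply ENNReal.ofReal_le_ofReal
    apply one_div_le_one_div_of_le (by positivity)
    have hn0 : (0:ℝ) ≤ (n:ℝ) := Nat.cast_nonneg n
    have hd0 : (0:ℝ) ≤ (d:ℝ) := Nat.cast_nonneg d
    have hx : (1:ℝ) ≤ (n:ℝ) + (d:ℝ) + 2 := by linarith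
    have hpow : ((n:ℝ)+(d:ℝ)+1) * ((n:ℝ)+(d:ℝ)+2) ≤ ((n:ℝ)+(d:ℝ)+2) ^ (k-1) := by
      calc ((n:ℝ)+(d:ℝ)+1) * ((n:ℝ)+(d:ℝ)+2)
          ≤ ((n:ℝ)+(d:ℝ)+2) * ((n:ℝ)+(d:ℝ)+2) := by
            apply mul_le_mul_of_nonneg_right (by linarith) (by positivity)
        _ = ((n:ℝ)+(d:ℝ)+2) ^ 2 := by ring
        _ ≤ ((n:ℝ)+(d:ℝ)+2) ^ (k-1) := by
            apply pow_le_pow_right₀ hx (by omega)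
    have h1 : (0:ℝ) ≤ (n:ℝ) + 1 := by positivity
    exact mul_le_mul_of_nonneg_left hpow h1
  apply ne_top_of_le_ne_top _ (ENNReal.tsum_le_tsum hb)
  rw [ENNReal.tsum_prod']
  have inner : ∀ n : ℕ, (∑' d : ℕ, ENNReal.ofReal
        (1 / (((n:ℝ)+1) * (((n:ℝ)+(d:ℝ)+1) * ((n:ℝ)+(d:ℝ)+2)))))
      = ENNReal.ofReal (1 / (((n:ℝ)+1) * ((n:ℝ)+1))) := by
    intro n
    rw [← ENNReal.ofReal_tsum_of_nonneg (fun d => by positivity) (boundHasSum n).summable]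
    congr 1
    exact (boundHasSum n).tsum_eq
  rw [tsum_congr inner]
  have heq : ∀ n : ℕ, ENNReal.ofReal (1 / (((n:ℝ)+1) * ((n:ℝ)+1)))
      = ENNReal.ofReal (1 / ((n:ℝ)+1) ^ 2) := by
    intro n
    congr 2
    ring
  rw [tsum_congr heq]
  rw [← ENNReal.ofReal_tsum_of_nonneg (fun n => by positivity) (summable_shift 2 le_rfl)]
  exact ENNReal.ofReal_ne_top



lemma mainENN (k : ℕ) (hk : 3 ≤ k) :
    ∑ a ∈ Finset.Icc 2 (k-1), Denn a (k-a) = Zenn k := by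
  have h0 : ∑ a ∈ Finset.Icc 2 (k-1), Denn a (k-a)
      = ∑' q : ℕ × ℕ, ENNReal.ofReal (∑ a ∈ Finset.Icc 2 (k-1),
          1 / (((q.1:ℝ)+(q.2:ℝ)+2) ^ a * ((q.1:ℝ)+1) ^ (k-a))) := by
    rw [Finset.sum_congr rfl (fun a _ => DennCoord a (k-a))]
    rw [← Summable.tsum_finsetSum (fun a _ => ENNReal.summable)]
    apply tsum_congr
    intro q
    rw [ENNReal.ofReal_sum_of_nonneg (fun a _ => by positivity)]
  have h1 : (∑' q : ℕ × ℕ, ENNReal.ofReal (∑ a ∈ Finset.Icc 2 (k-1),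
          1 / (((q.1:ℝ)+(q.2:ℝ)+2) ^ a * ((q.1:ℝ)+1) ^ (k-a))))
      + (∑' q : ℕ × ℕ, ENNReal.ofReal
          (1 / (((q.2:ℝ) + 1) * ((q.1:ℝ) + (q.2:ℝ) + 2) ^ (k-1))))
      = ∑' q : ℕ × ℕ, ENNReal.ofReal
          (1 / (((q.1:ℝ) + 1) ^ (k-2) * ((q.2:ℝ) + 1) * ((q.1:ℝ) + (q.2:ℝ) + 2))) := by
    rw [← ENNReal.tsum_add]
    apply tsum_congr
    intro q
    rw [← ENNReal.ofReal_add (Finset.sum_nonneg (fun a _ => by positivity)) (by positivity)]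
    rw [master k hk q.1 q.2]
  rw [Esum k hk, Bswap k] at h1
  rw [h0, ZennCoord]
  have hfin := Bfin k hk
  have h2 := h1
  rw [add_comm (∑' q : ℕ × ℕ, ENNReal.ofReal (∑ a ∈ Finset.Icc 2 (k-1),
          1 / (((q.1:ℝ)+(q.2:ℝ)+2) ^ a * ((q.1:ℝ)+1) ^ (k-a)))),
      add_comm (∑' n : ℕ, ENNReal.ofReal (1 / ((n:ℝ) + 1) ^ k))] at h2
  exact (ENNReal.add_right_inj hfin).mp h2

lemma zeta_nonneg_fun (s : ℕ) : ∀ m : ℕ, 0 ≤ (if 1 ≤ m then 1 / (m : ℝ) ^ s else 0) := by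
  intro m; split <;> positivity

lemma dz_nonneg_fun (a b : ℕ) : ∀ p : ℕ × ℕ,
    0 ≤ (if 1 ≤ p.2 ∧ p.2 < p.1 then 1 / ((p.1 : ℝ) ^ a * (p.2 : ℝ) ^ b) else 0) := by
  intro p; split <;> positivity

lemma zeta_eq (s : ℕ) : zetaVal s = (Zenn s).toReal :=
  (tsum_ofReal_toReal (zeta_nonneg_fun s)).symm

lemma dz_eq (a b : ℕ) : doubleZeta a b = (Denn a b).toReal :=
  (tsum_ofReal_toReal (dz_nonneg_fun a b)).symm

lemma Zfin (s : ℕ) (hs : 2 ≤ s) : Zenn s ≠ ⊤ := by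
  rw [ZennCoord, ← ENNReal.ofReal_tsum_of_nonneg (fun n => by positivity) (summable_shift s hs)]
  exact ENNReal.ofReal_ne_top

end SumFormulaProofAux

theorem sum_formula_depth_two (t : ℝ) (k : ℕ) (hk : 3 ≤ k) :
    ∑ a ∈ Finset.Icc 2 (k - 1), tDoubleZeta t a (k - a) =
      (1 + ((k : ℝ) - 2) * t) * zetaVal k := by
  have hZfin : SumFormulaProofAux.Zenn k ≠ ⊤ := SumFormulaProofAux.Zfin k (by omega)
  have hmain := SumFormulaProofAux.mainENN k hk
  have hDfin : ∀ a ∈ Finset.Icc 2 (k-1), SumFormulaProofAux.Denn a (k-a) ≠ ⊤ := by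
    intro a ha
    refine ne_top_of_le_ne_top (hmain ▸ hZfin) ?_
    exact Finset.single_le_sum (f := fun a => SumFormulaProofAux.Denn a (k-a))
      (fun i _ => zero_le) ha
  have hdzsum : ∑ a ∈ Finset.Icc 2 (k-1), doubleZeta a (k-a) = zetaVal k := by
    rw [Finset.sum_congr rfl (fun a _ => SumFormulaProofAux.dz_eq a (k-a)),
      SumFormulaProofAux.zeta_eq k]
    rw [← ENNReal.toReal_sum hDfin, hmain]
  have hstep : ∑ a ∈ Finset.Icc 2 (k - 1), tDoubleZeta t a (k - a)
      = ∑ a ∈ Finset.Icc 2 (k-1), (doubleZeta a (k-a) + t * zetaVal k) := by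
    apply Finset.sum_congr rfl
    intro a ha
    rw [Finset.mem_Icc] at ha
    unfold tDoubleZeta
    rw [show a + (k - a) = k by omega]
  rw [hstep, Finset.sum_add_distrib, hdzsum, Finset.sum_const, Nat.card_Icc]
  rw [show k - 1 + 1 - 2 = k - 2 by omega]
  rw [nsmul_eq_mul]
  rw [show ((k - 2 : ℕ) : ℝ) = (k : ℝ) - 2 by
    rw [Nat.cast_sub (by omega)]; norm_num]
  ring
end

section
/- Hoffman's relation in depth one for interpolated double zeta values: for every integer k ≥ 2 and real parameter t, (1 + (k-1)·t) · ζ(k+1) = ∑_{j=2}^{k} ζ^t(j, k+1-j), where ζ^t(a,b) = ζ(a,b) + t·ζ(a+b). -/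
open Finset Filter Topology

noncomputable def harmR (n : ℕ) : ℝ := ∑ i ∈ Finset.range n, 1 / ((i : ℝ) + 1)

lemma harmR_nonneg (n : ℕ) : 0 ≤ harmR n :=
  Finset.sum_nonneg fun i _ => by positivity

lemma harmR_succ (n : ℕ) : harmR (n + 1) = harmR n + 1 / ((n : ℝ) + 1) :=
  Finset.sum_range_succ _ n

lemma tele_hasSum (d : ℕ) :
    HasSum (fun i : ℕ => 1 / (((i : ℝ) + d + 1) * ((i : ℝ) + d + 2))) (1 / ((d : ℝ) + 1)) := by
  rw [hasSum_iff_tendsto_nat_of_nonneg (fun i => by positivity)]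
  have key : ∀ N : ℕ, ∑ i ∈ Finset.range N, 1 / (((i : ℝ) + d + 1) * ((i : ℝ) + d + 2))
      = 1 / ((d : ℝ) + 1) - 1 / ((N : ℝ) + d + 1) := by
    intro N
    have h1 : ∀ i ∈ Finset.range N, 1 / (((i : ℝ) + d + 1) * ((i : ℝ) + d + 2))
        = (fun i : ℕ => 1 / ((i : ℝ) + d + 1)) i - (fun i : ℕ => 1 / ((i : ℝ) + d + 1)) (i + 1) := by
      intro i _
      have hi : (0:ℝ) < (i : ℝ) + d + 1 := by positivity
      have hi2 : (0:ℝ) < (i : ℝ) + d + 2 := by positivity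
      push_cast
      have h3 : (0:ℝ) < (i : ℝ) + 1 + d + 1 := by positivity
      rw [div_sub_div _ _ hi.ne' h3.ne', div_eq_div_iff (by positivity) (by positivity)]
      ring
    rw [Finset.sum_congr rfl h1, Finset.sum_range_sub' (fun i : ℕ => 1 / ((i : ℝ) + d + 1)) N]
    norm_num
  simp only [key]
  have h0 : Tendsto (fun N : ℕ => 1 / ((N : ℝ) + d + 1)) atTop (𝓝 0) := by
    have := (tendsto_add_atTop_iff_nat d).2 (tendsto_one_div_add_atTop_nhds_zero_nat (𝕜 := ℝ))
    refine this.congr fun n => ?_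
    push_cast; ring_nf
  simpa using tendsto_const_nhds.sub h0

lemma harmR_add (n m : ℕ) :
    harmR (n + m) = harmR n + ∑ i ∈ Finset.range m, 1 / ((n : ℝ) + i + 1) := by
  rw [harmR, Finset.sum_range_add]
  congr 1
  exact Finset.sum_congr rfl fun i _ => by push_cast; ring_nf

lemma harm_hasSum (n : ℕ) :
    HasSum (fun l : ℕ => 1 / (((l : ℝ) + 1) * ((l : ℝ) + 1 + ((n : ℝ) + 1))))
      (harmR (n + 1) / ((n : ℝ) + 1)) := by
  rw [hasSum_iff_tendsto_nat_of_nonneg (fun l => by positivity)]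
  have key : ∀ M : ℕ, ∑ l ∈ Finset.range M, 1 / (((l : ℝ) + 1) * ((l : ℝ) + 1 + ((n : ℝ) + 1)))
      = (harmR (n + 1) - ∑ i ∈ Finset.range (n + 1), 1 / ((M : ℝ) + i + 1)) / ((n : ℝ) + 1) := by
    intro M
    have h1 : ∀ l ∈ Finset.range M, 1 / (((l : ℝ) + 1) * ((l : ℝ) + 1 + ((n : ℝ) + 1)))
        = (1 / ((l : ℝ) + 1) - 1 / ((l : ℝ) + (n : ℝ) + 2)) / ((n : ℝ) + 1) := by
      intro l _
      have a1 : (0:ℝ) < (l : ℝ) + 1 := by positivity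
      have a2 : (0:ℝ) < (l : ℝ) + (n : ℝ) + 2 := by positivity
      rw [div_sub_div _ _ a1.ne' a2.ne', div_div, div_eq_div_iff (by positivity) (by positivity)]
      ring
    rw [Finset.sum_congr rfl h1, ← Finset.sum_div, Finset.sum_sub_distrib]
    have e1 : ∑ l ∈ Finset.range M, 1 / ((l : ℝ) + (n : ℝ) + 2)
        = harmR ((n + 1) + M) - harmR (n + 1) := by
      rw [harmR_add (n + 1) M]
      have : ∀ i ∈ Finset.range M, 1 / (((n + 1 : ℕ) : ℝ) + i + 1) = 1 / ((i : ℝ) + (n : ℝ) + 2) := by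
        intro i _; push_cast; ring_nf
      rw [Finset.sum_congr rfl this]
      ring
    have e2 : harmR ((n + 1) + M) = harmR M + ∑ i ∈ Finset.range (n + 1), 1 / ((M : ℝ) + i + 1) := by
      rw [Nat.add_comm (n + 1) M, harmR_add M (n + 1)]
    rw [e1, e2, show (∑ l ∈ Finset.range M, 1 / ((l : ℝ) + 1)) = harmR M from rfl]
    ring
  simp only [key]
  have hT0 : Tendsto (fun M : ℕ => ∑ i ∈ Finset.range (n + 1), 1 / ((M : ℝ) + i + 1)) atTop (𝓝 0) := by
    have hb : Tendsto (fun M : ℕ => ((n : ℝ) + 1) * (1 / ((M : ℝ) + 1))) atTop (𝓝 0) := by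
      simpa using tendsto_one_div_add_atTop_nhds_zero_nat.const_mul ((n : ℝ) + 1)
    refine tendsto_of_tendsto_of_tendsto_of_le_of_le tendsto_const_nhds hb
      (fun M => by positivity) (fun M => ?_)
    calc ∑ i ∈ Finset.range (n + 1), 1 / ((M : ℝ) + i + 1)
        ≤ ∑ _i ∈ Finset.range (n + 1), 1 / ((M : ℝ) + 1) := by
          refine Finset.sum_le_sum fun i _ => ?_
          have hi : (0:ℝ) ≤ (i : ℝ) := Nat.cast_nonneg i
          exact one_div_le_one_div_of_le (by positivity) (by linarith)
      _ = ((n : ℝ) + 1) * (1 / ((M : ℝ) + 1)) := by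
          rw [Finset.sum_const, Finset.card_range]
          push_cast
          ring
  simpa using (tendsto_const_nhds.sub hT0).div_const ((n : ℝ) + 1)

lemma geom_id (e : ℕ) (n d : ℝ) (hn : 0 < n) (hd : 0 < d) :
    ∑ j ∈ Finset.Icc 2 (e + 2), 1 / ((n + d) ^ j * n ^ (e + 3 - j))
      + 1 / (d * (n + d) ^ (e + 2)) = 1 / (d * (n + d) * n ^ (e + 1)) := by
  have hm : (0:ℝ) < n + d := by linarith
  induction e with
  | zero =>
    rw [show Finset.Icc 2 2 = {2} from Finset.Icc_self 2, Finset.sum_singleton]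
    norm_num
    field_simp
    ring
  | succ e ih =>
    have hsum : ∑ j ∈ Finset.Icc 2 (e + 3), 1 / ((n + d) ^ j * n ^ (e + 4 - j))
        = (1 / n) * ∑ j ∈ Finset.Icc 2 (e + 2), 1 / ((n + d) ^ j * n ^ (e + 3 - j))
          + 1 / ((n + d) ^ (e + 3) * n) := by
      rw [show e + 3 = (e + 2) + 1 from rfl, Finset.sum_Icc_succ_top (by omega), Finset.mul_sum]
      congr 1
      · refine Finset.sum_congr rfl fun j hj => ?_
        have hj2 : j ≤ e + 2 := (Finset.mem_Icc.mp hj).2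
        have hexp : e + 2 + 1 + 1 - j = (e + 3 - j) + 1 := by omega
        rw [hexp, pow_succ]
        field_simp
      · rw [show e + 4 - (e + 2 + 1) = 1 from by omega, pow_one]
    have hS : ∑ j ∈ Finset.Icc 2 (e + 2), 1 / ((n + d) ^ j * n ^ (e + 3 - j))
        = 1 / (d * (n + d) * n ^ (e + 1)) - 1 / (d * (n + d) ^ (e + 2)) := by linarith
    rw [show e + 1 + 2 = e + 3 from rfl, show e + 1 + 3 = e + 4 from rfl,
      show e + 1 + 1 = e + 2 from rfl, hsum, hS]
    field_simp
    ring

lemma pointw (e i l : ℕ) :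
    ∑ j ∈ Finset.Icc 2 (e + 2), 1 / (((i : ℝ) + (l : ℝ) + 2) ^ j * ((i : ℝ) + 1) ^ (e + 3 - j))
      + 1 / (((l : ℝ) + 1) * ((i : ℝ) + (l : ℝ) + 2) ^ (e + 2))
      = 1 / (((l : ℝ) + 1) * ((i : ℝ) + (l : ℝ) + 2) * ((i : ℝ) + 1) ^ (e + 1)) := by
  have h := geom_id e ((i : ℝ) + 1) ((l : ℝ) + 1) (by positivity) (by positivity)
  rw [show (i : ℝ) + 1 + ((l : ℝ) + 1) = (i : ℝ) + (l : ℝ) + 2 from by ring] at h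
  exact h

section Main

open ENNReal

theorem hoffman_depth_one (t : ℝ) (k : ℕ) (hk : 2 ≤ k) :
    (1 + ((k : ℝ) - 1) * t) * zetaVal (k + 1) =
      ∑ j ∈ Finset.Icc 2 k, tDoubleZeta t j (k + 1 - j) := by
  classical
  obtain ⟨e, rfl⟩ : ∃ e, k = e + 2 := ⟨k - 2, by omega⟩
  clear hk
  -- ENNReal version of the double zeta summand
  let F : ℕ → ℕ × ℕ → ℝ≥0∞ := fun j p =>
    ENNReal.ofReal (if 1 ≤ p.2 ∧ p.2 < p.1 then 1 / ((p.1 : ℝ) ^ j * (p.2 : ℝ) ^ (e + 3 - j)) else 0)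
  let A : ℕ → ℝ≥0∞ := fun j => ∑' p : ℕ × ℕ, F j p
  let B : ℝ≥0∞ := ∑' q : ℕ × ℕ,
    ENNReal.ofReal (1 / (((q.2 : ℝ) + 1) * ((q.1 : ℝ) + (q.2 : ℝ) + 2) ^ (e + 2)))
  let Z : ℝ≥0∞ := ∑' i : ℕ, ENNReal.ofReal (1 / ((i : ℝ) + 1) ^ (e + 3))
  -- Step 1 : reindex A j over (i, l) with n = i+1, d = l+1, m = i+l+2
  have hA : ∀ j, A j = ∑' q : ℕ × ℕ,
      ENNReal.ofReal (1 / (((q.1 : ℝ) + (q.2 : ℝ) + 2) ^ j * ((q.1 : ℝ) + 1) ^ (e + 3 - j))) := by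
    intro j
    have hinj : Function.Injective (fun q : ℕ × ℕ => ((q.1 + q.2 + 2, q.1 + 1) : ℕ × ℕ)) := by
      intro a b hab
      simp only [Prod.mk.injEq] at hab
      rw [Prod.ext_iff]
      omega
    have hsupp : Function.support (F j) ⊆
        Set.range (fun q : ℕ × ℕ => ((q.1 + q.2 + 2, q.1 + 1) : ℕ × ℕ)) := by
      intro p hp
      rw [Function.mem_support] at hp
      by_cases hc : 1 ≤ p.2 ∧ p.2 < p.1
      · refine ⟨(p.2 - 1, p.1 - p.2 - 1), ?_⟩
        obtain ⟨h1, h2⟩ := hc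
        dsimp only
        rw [Prod.ext_iff]
        exact ⟨by omega, by omega⟩
      · exact absurd (by simp only [F, if_neg hc, ENNReal.ofReal_zero]) hp
    rw [show A j = ∑' p : ℕ × ℕ, F j p from rfl, ← Function.Injective.tsum_eq hinj hsupp]
    refine tsum_congr fun q => ?_
    simp only [F]
    rw [if_pos ⟨by omega, by omega⟩]
    congr 1
    push_cast
    ring_nf
  -- Step 2 : swap the finite sum inside and apply the pointwise identity
  have hABC : (∑ j ∈ Finset.Icc 2 (e + 2), A j) + B
      = ∑' q : ℕ × ℕ, ENNReal.ofReal
          (1 / (((q.2 : ℝ) + 1) * ((q.1 : ℝ) + (q.2 : ℝ) + 2) * ((q.1 : ℝ) + 1) ^ (e + 1))) := by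
    have h1 : ∑ j ∈ Finset.Icc 2 (e + 2), A j
        = ∑' q : ℕ × ℕ, ENNReal.ofReal (∑ j ∈ Finset.Icc 2 (e + 2),
            1 / (((q.1 : ℝ) + (q.2 : ℝ) + 2) ^ j * ((q.1 : ℝ) + 1) ^ (e + 3 - j))) := by
      rw [Finset.sum_congr rfl fun j _ => hA j, ← Summable.tsum_finsetSum fun j _ => ENNReal.summable]
      exact tsum_congr fun q => (ENNReal.ofReal_sum_of_nonneg fun j _ => by positivity).symm
    rw [h1, ← ENNReal.tsum_add]
    refine tsum_congr fun q => ?_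
    rw [← ENNReal.ofReal_add (Finset.sum_nonneg fun j _ => by positivity) (by positivity),
      pointw e q.1 q.2]
  -- Step 3 : compute the right-hand side of hABC
  have hC : (∑' q : ℕ × ℕ, ENNReal.ofReal
        (1 / (((q.2 : ℝ) + 1) * ((q.1 : ℝ) + (q.2 : ℝ) + 2) * ((q.1 : ℝ) + 1) ^ (e + 1))))
      = ∑' i : ℕ, ENNReal.ofReal (harmR (i + 1) / ((i : ℝ) + 1) ^ (e + 2)) := by
    rw [ENNReal.tsum_prod']
    refine tsum_congr fun i => ?_
    have hsm : Summable fun l : ℕ => 1 / (((l : ℝ) + 1) * ((l : ℝ) + 1 + ((i : ℝ) + 1))) :=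
      (harm_hasSum i).summable
    calc ∑' l : ℕ, ENNReal.ofReal
          (1 / (((l : ℝ) + 1) * ((i : ℝ) + (l : ℝ) + 2) * ((i : ℝ) + 1) ^ (e + 1)))
        = ∑' l : ℕ, ENNReal.ofReal ((1 / ((i : ℝ) + 1) ^ (e + 1)) *
            (1 / (((l : ℝ) + 1) * ((l : ℝ) + 1 + ((i : ℝ) + 1))))) := by
          refine tsum_congr fun l => ?_
          congr 1
          rw [show (l : ℝ) + 1 + ((i : ℝ) + 1) = (i : ℝ) + (l : ℝ) + 2 from by ring,
            div_mul_div_comm, one_mul]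
          congr 1
          ring
      _ = ENNReal.ofReal (∑' l : ℕ, (1 / ((i : ℝ) + 1) ^ (e + 1)) *
            (1 / (((l : ℝ) + 1) * ((l : ℝ) + 1 + ((i : ℝ) + 1))))) :=
          (ENNReal.ofReal_tsum_of_nonneg (fun l => by positivity) (hsm.mul_left _)).symm
      _ = ENNReal.ofReal (harmR (i + 1) / ((i : ℝ) + 1) ^ (e + 2)) := by
          rw [tsum_mul_left, (harm_hasSum i).tsum_eq, div_mul_div_comm, one_mul, ← pow_succ]
  -- Step 4 : compute B, grouped by m = u + 2
  have hB : B = ∑' u : ℕ, ENNReal.ofReal (harmR (u + 1) / ((u : ℝ) + 2) ^ (e + 2)) := by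
    have hinj2 : Function.Injective (fun q : ℕ × ℕ => ((q.1 + q.2, q.2) : ℕ × ℕ)) := by
      intro a b hab
      simp only [Prod.mk.injEq] at hab
      rw [Prod.ext_iff]
      omega
    have hsupp2 : Function.support (fun p : ℕ × ℕ =>
        if p.2 ≤ p.1 then ENNReal.ofReal (1 / (((p.2 : ℝ) + 1) * ((p.1 : ℝ) + 2) ^ (e + 2))) else 0)
        ⊆ Set.range (fun q : ℕ × ℕ => ((q.1 + q.2, q.2) : ℕ × ℕ)) := by
      intro p hp
      rw [Function.mem_support] at hp
      by_cases hc : p.2 ≤ p.1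
      · refine ⟨(p.1 - p.2, p.2), ?_⟩
        dsimp only
        rw [Prod.ext_iff]
        exact ⟨by omega, by omega⟩
      · exact absurd (if_neg hc) hp
    have step1 : B = ∑' p : ℕ × ℕ,
        (if p.2 ≤ p.1 then ENNReal.ofReal (1 / (((p.2 : ℝ) + 1) * ((p.1 : ℝ) + 2) ^ (e + 2))) else 0) := by
      rw [← Function.Injective.tsum_eq hinj2 hsupp2]
      refine tsum_congr fun q => ?_
      dsimp only
      rw [if_pos (Nat.le_add_left q.2 q.1)]
      congr 2
      push_cast
      ring
    rw [step1, ENNReal.tsum_prod']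
    refine tsum_congr fun u => ?_
    rw [tsum_eq_sum (s := Finset.range (u + 1))
      (fun v hv => if_neg (fun h => hv (Finset.mem_range.mpr (by omega))))]
    rw [Finset.sum_congr rfl fun v hv => if_pos (by
      have := Finset.mem_range.mp hv; omega)]
    rw [← ENNReal.ofReal_sum_of_nonneg fun v _ => by positivity]
    congr 1
    rw [harmR, Finset.sum_div]
    refine Finset.sum_congr rfl fun v _ => ?_
    rw [div_div]
  -- Step 5 : split C pointwise as Z + shifted B
  have hD : (∑' i : ℕ, (if 1 ≤ i then ENNReal.ofReal (harmR i / ((i : ℝ) + 1) ^ (e + 2)) else 0))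
      = ∑' u : ℕ, ENNReal.ofReal (harmR (u + 1) / ((u : ℝ) + 2) ^ (e + 2)) := by
    rw [← Function.Injective.tsum_eq (g := fun u : ℕ => u + 1)
      (fun a b hab => Nat.add_right_cancel hab) ?_]
    · refine tsum_congr fun u => ?_
      rw [if_pos (by omega)]
      have : ((u + 1 : ℕ) : ℝ) + 1 = (u : ℝ) + 2 := by push_cast; ring
      rw [this]
    · intro i hi
      rw [Function.mem_support] at hi
      rcases Nat.eq_zero_or_pos i with h0 | h1
      · exact absurd (by rw [h0, if_neg (by omega)]) hi
      · exact ⟨i - 1, show i - 1 + 1 = i by omega⟩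
  have hCZB : (∑' i : ℕ, ENNReal.ofReal (harmR (i + 1) / ((i : ℝ) + 1) ^ (e + 2)))
      = Z + (∑' u : ℕ, ENNReal.ofReal (harmR (u + 1) / ((u : ℝ) + 2) ^ (e + 2))) := by
    have hsplit : ∀ i : ℕ, ENNReal.ofReal (harmR (i + 1) / ((i : ℝ) + 1) ^ (e + 2))
        = ENNReal.ofReal (1 / ((i : ℝ) + 1) ^ (e + 3)) +
          (if 1 ≤ i then ENNReal.ofReal (harmR i / ((i : ℝ) + 1) ^ (e + 2)) else 0) := by
      intro i
      rcases Nat.eq_zero_or_pos i with h0 | h1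
      · subst h0
        rw [if_neg (by omega)]
        norm_num [harmR_succ, harmR]
      · have h1' : 1 ≤ i := h1
        rw [if_pos h1', ← ENNReal.ofReal_add (by positivity)
          (div_nonneg (harmR_nonneg i) (by positivity))]
        congr 1
        rw [harmR_succ, add_div, div_div, ← pow_succ']
        exact add_comm _ _
    calc (∑' i : ℕ, ENNReal.ofReal (harmR (i + 1) / ((i : ℝ) + 1) ^ (e + 2)))
        = ∑' i : ℕ, (ENNReal.ofReal (1 / ((i : ℝ) + 1) ^ (e + 3)) +
            (if 1 ≤ i then ENNReal.ofReal (harmR i / ((i : ℝ) + 1) ^ (e + 2)) else 0)) :=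
          tsum_congr hsplit
      _ = Z + (∑' i : ℕ, (if 1 ≤ i then ENNReal.ofReal (harmR i / ((i : ℝ) + 1) ^ (e + 2)) else 0)) :=
          ENNReal.tsum_add
      _ = Z + (∑' u : ℕ, ENNReal.ofReal (harmR (u + 1) / ((u : ℝ) + 2) ^ (e + 2))) := by rw [hD]
  -- Step 6 : B is finite
  have hsq : Summable (fun l : ℕ => 1 / ((l : ℝ) + 1) ^ 2) := by
    have h2 := Real.summable_one_div_nat_pow.mpr (show 1 < 2 by norm_num)
    exact ((summable_nat_add_iff 1).mpr h2).congr fun l => by push_cast; ring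
  have hBfin : B ≠ ⊤ := by
    have hle : B ≤ ∑' q : ℕ × ℕ, ENNReal.ofReal ((1 / ((q.2 : ℝ) + 1)) *
        (1 / (((q.1 : ℝ) + (q.2 : ℝ) + 1) * ((q.1 : ℝ) + (q.2 : ℝ) + 2)))) := by
      refine ENNReal.tsum_le_tsum fun q => ENNReal.ofReal_le_ofReal ?_
      rw [div_mul_div_comm, one_mul]
      refine one_div_le_one_div_of_le (by positivity) ?_
      refine mul_le_mul_of_nonneg_left ?_ (by positivity)
      have hc1 : (0:ℝ) ≤ (q.1 : ℝ) := Nat.cast_nonneg _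
      have hc2 : (0:ℝ) ≤ (q.2 : ℝ) := Nat.cast_nonneg _
      have h1 : ((q.1 : ℝ) + q.2 + 1) * ((q.1 : ℝ) + q.2 + 2) ≤ ((q.1 : ℝ) + q.2 + 2) ^ 2 := by
        nlinarith
      have h2 : ((q.1 : ℝ) + q.2 + 2) ^ 2 ≤ ((q.1 : ℝ) + q.2 + 2) ^ (e + 2) :=
        pow_le_pow_right₀ (by linarith) (by omega)
      linarith
    have heq : (∑' q : ℕ × ℕ, ENNReal.ofReal ((1 / ((q.2 : ℝ) + 1)) *
        (1 / (((q.1 : ℝ) + (q.2 : ℝ) + 1) * ((q.1 : ℝ) + (q.2 : ℝ) + 2)))))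
        = ∑' l : ℕ, ENNReal.ofReal ((1 / ((l : ℝ) + 1)) * (1 / ((l : ℝ) + 1))) := by
      rw [ENNReal.tsum_prod', ENNReal.tsum_comm]
      refine tsum_congr fun l => ?_
      dsimp only
      rw [← ENNReal.ofReal_tsum_of_nonneg (fun i => by positivity)
        (((tele_hasSum l).summable).mul_left _)]
      congr 1
      rw [tsum_mul_left, (tele_hasSum l).tsum_eq]
    have hfin2 : (∑' l : ℕ, ENNReal.ofReal ((1 / ((l : ℝ) + 1)) * (1 / ((l : ℝ) + 1)))) ≠ ⊤ := by
      rw [← ENNReal.ofReal_tsum_of_nonneg (fun l => by positivity)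
        (hsq.congr fun l => by rw [sq, div_mul_div_comm, one_mul])]
      exact ENNReal.ofReal_ne_top
    exact ne_top_of_le_ne_top (heq ▸ hfin2) hle
  -- Step 7 : facts about Z and zetaVal
  have hsum3 : Summable (fun i : ℕ => 1 / ((i : ℝ) + 1) ^ (e + 3)) := by
    have h2 := Real.summable_one_div_nat_pow.mpr (show 1 < e + 3 by omega)
    exact ((summable_nat_add_iff 1).mpr h2).congr fun l => by push_cast; ring
  have hZeq : Z = ENNReal.ofReal (∑' i : ℕ, 1 / ((i : ℝ) + 1) ^ (e + 3)) :=
    (ENNReal.ofReal_tsum_of_nonneg (fun i => by positivity) hsum3).symm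
  have hZfin : Z ≠ ⊤ := by rw [hZeq]; exact ENNReal.ofReal_ne_top
  have hzv : zetaVal (e + 2 + 1) = ∑' i : ℕ, 1 / ((i : ℝ) + 1) ^ (e + 3) := by
    rw [zetaVal]
    rw [← Function.Injective.tsum_eq (g := fun i : ℕ => i + 1)
      (fun a b hab => Nat.add_right_cancel hab) ?_]
    · refine tsum_congr fun i => ?_
      rw [if_pos (by omega)]
      have : ((i + 1 : ℕ) : ℝ) = (i : ℝ) + 1 := by push_cast; ring
      rw [this]
    · intro m hm
      rw [Function.mem_support] at hm
      rcases Nat.eq_zero_or_pos m with h0 | h1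
      · exact absurd (by rw [h0, if_neg (by omega)]) hm
      · exact ⟨m - 1, show m - 1 + 1 = m by omega⟩
  have hzZ : Z.toReal = zetaVal (e + 2 + 1) := by
    rw [hzv, hZeq, ENNReal.toReal_ofReal (tsum_nonneg fun i => by positivity)]
  -- Step 8 : the main cancellation
  have hmain : ∑ j ∈ Finset.Icc 2 (e + 2), A j = Z := by
    have h1 : (∑ j ∈ Finset.Icc 2 (e + 2), A j) + B = Z + B := by
      rw [hABC, hC, hCZB, ← hB]
    rwa [add_comm _ B, add_comm Z B, ENNReal.add_right_inj hBfin] at h1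
  -- Step 9 : each A j is finite, and equals the corresponding double zeta value
  have hAfin : ∀ j ∈ Finset.Icc 2 (e + 2), A j ≠ ⊤ := by
    intro j hj
    refine ne_top_of_le_ne_top hZfin ?_
    rw [← hmain]
    exact Finset.single_le_sum (f := A) (fun _ _ => zero_le) hj
  have hdz : ∀ j ∈ Finset.Icc 2 (e + 2), doubleZeta j (e + 2 + 1 - j) = (A j).toReal := by
    intro j hj
    rw [doubleZeta, show A j = ∑' p : ℕ × ℕ, F j p from rfl,
      ENNReal.tsum_toReal_eq (fun p => ENNReal.ofReal_ne_top)]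
    refine tsum_congr fun p => ?_
    rw [ENNReal.toReal_ofReal (by
      by_cases hc : 1 ≤ p.2 ∧ p.2 < p.1
      · rw [if_pos hc]; positivity
      · rw [if_neg hc])]
  -- Step 10 : conclusion
  have hjj : ∀ j ∈ Finset.Icc 2 (e + 2),
      tDoubleZeta t j (e + 2 + 1 - j) = (A j).toReal + t * zetaVal (e + 2 + 1) := by
    intro j hj
    have hmem := Finset.mem_Icc.mp hj
    rw [tDoubleZeta, hdz j hj, show j + (e + 2 + 1 - j) = e + 2 + 1 from by omega]
  rw [Finset.sum_congr rfl hjj, Finset.sum_add_distrib, Finset.sum_const,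
    ← ENNReal.toReal_sum hAfin, hmain, hzZ, Nat.card_Icc]
  have : (e + 2 + 1 - 2) = e + 1 := by omega
  rw [this, nsmul_eq_mul]
  push_cast
  ring

end Main
end
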